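/- arXiv:1510.05246 — 5 statements merged into one kernel-verified Lean document; each statement's English description precedes it below -/
import Mathlib

section
/- Let G be a finite connected simple graph and let k ≥ 3 be the smallest integer such that G has a spanning tree with exactly k leaves. If T is any spanning tree of G with k leaves, then no two leaves of T are adjacent in G (i.e., the set of leaves of T is an independent set in G). -/
open SimpleGraph Walk Set

section AuxLeafExchange

variable {V : Type*} [DecidableEq V] [Fintype V]

lemma aux_interior {T : SimpleGraph V} {u v a : V} (p : T.Walk u v) (hp : p.IsPath)
    (ha : a ∈ p.support) (hau : a ≠ u) (hav : a ≠ v) :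
    ∃ b c : V, b ≠ c ∧ T.Adj a b ∧ T.Adj a c ∧ b ∈ p.support ∧ c ∈ p.support := by
  obtain ⟨b, hab, r, hr⟩ := Walk.exists_eq_cons_of_ne hau (p.takeUntil a ha).reverse
  obtain ⟨c, hac, s, hs⟩ := Walk.exists_eq_cons_of_ne hav (p.dropUntil a ha)
  have hb : b ∈ (p.takeUntil a ha).support := by
    have : b ∈ (p.takeUntil a ha).reverse.support := by
      rw [hr]; simp
    rwa [Walk.support_reverse, List.mem_reverse] at this
  have hc : c ∈ (p.dropUntil a ha).support.tail := by
    have : (p.dropUntil a ha).support = a :: s.support := by rw [hs]; simp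
    rw [this]; simp
  have hnd : (p.takeUntil a ha).support.Disjoint (p.dropUntil a ha).support.tail := by
    have := hp.support_nodup
    rw [← Walk.take_spec p ha, Walk.support_append] at this
    exact List.disjoint_of_nodup_append this
  refine ⟨b, c, fun hbc => hnd hb (hbc ▸ hc), hab, hac, ?_, ?_⟩
  · exact Walk.support_takeUntil_subset p ha hb
  · have : c ∈ (p.dropUntil a ha).support := List.mem_of_mem_tail hc
    exact Walk.support_dropUntil_subset p ha this

lemma aux_end {T : SimpleGraph V} {u v b : V} (p : T.Walk u v) (huv : u ≠ v)
    (hu : (T.neighborSet u).ncard = 1) (hb : T.Adj u b) : b ∈ p.support := by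
  obtain ⟨b₀, hab, r, hr⟩ := Walk.exists_eq_cons_of_ne huv p
  obtain ⟨x, hx⟩ := Set.ncard_eq_one.mp hu
  have h1 : b = x := by have : b ∈ T.neighborSet u := hb; rwa [hx, Set.mem_singleton_iff] at this
  have h2 : b₀ = x := by
    have : b₀ ∈ T.neighborSet u := hab; rwa [hx, Set.mem_singleton_iff] at this
  rw [h1, ← h2, hr]
  simp

lemma aux_branch {T : SimpleGraph V} (hT : T.IsTree) {u v : V} {k : ℕ} (hk3 : 3 ≤ k)
    (hL : {z : V | (T.neighborSet z).ncard = 1}.ncard = k)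
    (hu : (T.neighborSet u).ncard = 1) (hv : (T.neighborSet v).ncard = 1) (huv : u ≠ v)
    (p : T.Walk u v) (hp : p.IsPath) :
    ∃ w, w ∈ p.support ∧ w ≠ u ∧ w ≠ v ∧ 3 ≤ (T.neighborSet w).ncard := by
  by_contra hno
  push_neg at hno
  have hdeg : ∀ a ∈ p.support, a ≠ u → a ≠ v → (T.neighborSet a).ncard ≤ 2 := by
    intro a ha h1 h2
    have := hno a ha h1 h2
    omega
  -- closure
  have hclosed : ∀ a b, T.Adj a b → a ∈ p.support → b ∈ p.support := by
    intro a b hab ha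
    by_cases hau : a = u
    · subst hau; exact aux_end p huv hu hab
    by_cases hav : a = v
    · subst hav
      have := aux_end p.reverse (Ne.symm huv) hv hab
      rwa [Walk.support_reverse, List.mem_reverse] at this
    obtain ⟨b', c', hbc, hab', hac', hb', hc'⟩ := aux_interior p hp ha hau hav
    have hsub : {b', c'} ⊆ T.neighborSet a := by
      intro z hz
      rcases hz with rfl | hz
      · exact hab'
      · rw [Set.mem_singleton_iff] at hz; subst hz; exact hac'
    have hcard : (T.neighborSet a).ncard ≤ ({b', c'} : Set V).ncard := by
      rw [Set.ncard_pair hbc]; exact hdeg a ha hau hav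
    have := Set.eq_of_subset_of_ncard_le hsub hcard
    have hbmem : b ∈ ({b', c'} : Set V) := by rw [this]; exact hab
    rcases hbmem with rfl | hbm
    · exact hb'
    · rw [Set.mem_singleton_iff] at hbm; subst hbm; exact hc'
  -- everything is on the path
  have hall : ∀ z : V, z ∈ p.support := by
    have key : ∀ (a z : V) (q : T.Walk a z), a ∈ p.support → z ∈ p.support := by
      intro a z q
      induction q with
      | nil => exact id
      | cons h q ih => intro ha; exact ih (hclosed _ _ h ha)
    intro z
    obtain ⟨q⟩ := hT.isConnected.preconnected u z
    exact key u z q (Walk.start_mem_support p)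
  -- leaves are ⊆ {u, v}
  have hLsub : {z : V | (T.neighborSet z).ncard = 1} ⊆ {u, v} := by
    intro z hz
    by_contra hz'
    simp only [Set.mem_insert_iff, Set.mem_singleton_iff] at hz'
    push_neg at hz'
    obtain ⟨b', c', hbc, hab', hac', _, _⟩ :=
      aux_interior p hp (hall z) hz'.1 hz'.2
    have hsub : {b', c'} ⊆ T.neighborSet z := by
      intro y hy
      rcases hy with rfl | hy
      · exact hab'
      · rw [Set.mem_singleton_iff] at hy; subst hy; exact hac'
    have : ({b', c'} : Set V).ncard ≤ (T.neighborSet z).ncard :=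
      Set.ncard_le_ncard hsub (Set.toFinite _)
    rw [Set.ncard_pair hbc, hz] at this
    omega
  have : k ≤ ({u, v} : Set V).ncard := by
    rw [← hL]; exact Set.ncard_le_ncard hLsub (Set.toFinite _)
  have : ({u, v} : Set V).ncard ≤ 2 := by
    apply le_trans (Set.ncard_insert_le _ _); simp
  omega

end AuxLeafExchange

/-- Let `G` be a finite connected simple graph and let `k ≥ 3` be the smallest integer such
that `G` has a spanning tree with exactly `k` leaves. If `T` is any spanning tree of `G` with
`k` leaves, then no two leaves of `T` are adjacent in `G`. -/
theorem stmt_1 {V : Type*} [Fintype V] (G : SimpleGraph V) (hG : G.Connected) (k : ℕ)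
    (hk3 : 3 ≤ k)
    (hex : ∃ T : SimpleGraph V, T ≤ G ∧ T.IsTree ∧
      {v : V | (T.neighborSet v).ncard = 1}.ncard = k)
    (hmin : ∀ j : ℕ, (∃ T : SimpleGraph V, T ≤ G ∧ T.IsTree ∧
      {v : V | (T.neighborSet v).ncard = 1}.ncard = j) → k ≤ j)
    (T : SimpleGraph V) (hTG : T ≤ G) (hTtree : T.IsTree)
    (hTk : {v : V | (T.neighborSet v).ncard = 1}.ncard = k) :
    ∀ u v : V, u ≠ v → (T.neighborSet u).ncard = 1 → (T.neighborSet v).ncard = 1 →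
      ¬ G.Adj u v := by
  classical
  intro u v huv hu hv hGuv
  obtain ⟨p, hp, hpuniq⟩ := hTtree.existsUnique_path u v
  -- branch vertex
  obtain ⟨w, hwp, hwu, hwv, hw3⟩ := aux_branch hTtree hk3 hTk hu hv huv p hp
  -- decompose the path at w
  set t := p.takeUntil w hwp with ht
  set d := p.dropUntil w hwp with hd
  obtain ⟨x, hwx, r, hr⟩ := Walk.exists_eq_cons_of_ne hwu t.reverse
  have htp : t.IsPath := hp.takeUntil hwp
  have hdp : d.IsPath := hp.dropUntil hwp
  have hxw : x ≠ w := hwx.ne'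
  have hxt : x ∈ t.support := by
    have : x ∈ t.reverse.support := by rw [hr]; simp
    rwa [Walk.support_reverse, List.mem_reverse] at this
  have hdisj : t.support.Disjoint d.support.tail := by
    have := hp.support_nodup
    rw [← Walk.take_spec p hwp, Walk.support_append] at this
    exact List.disjoint_of_nodup_append this
  have hvd : v ∈ d.support.tail := by
    have h2 : v ∈ d.support := Walk.end_mem_support d
    rw [Walk.support_eq_cons d] at h2
    rcases List.mem_cons.mp h2 with h | h
    · exact absurd h (Ne.symm hwv)
    · exact h
  have hxv : x ≠ v := fun h => hdisj hxt (h ▸ hvd)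
  have hut : u ∈ t.support := Walk.start_mem_support t
  -- T does not contain edge uv
  have hTuv : ¬ T.Adj u v := by
    intro hadj
    have hsing : (Walk.cons hadj (Walk.nil : T.Walk v v)).IsPath := by
      rw [Walk.cons_isPath_iff]
      exact ⟨Walk.IsPath.nil, by simp [huv]⟩
    have := hpuniq _ hsing
    rw [← this] at hwp
    simp [hwu, hwv] at hwp
  -- the two distinguished edges
  have hef : s(u, v) ≠ s(w, x) := by
    intro h
    rw [Sym2.eq_iff] at h
    rcases h with ⟨h1, h2⟩ | ⟨h1, h2⟩
    · exact hwu h1.symm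
    · exact hwv h2.symm
  -- the new graph
  set E' : Set (Sym2 V) := (T.edgeSet \ {s(w, x)}) ∪ {s(u, v)} with hE'
  set T' : SimpleGraph V := SimpleGraph.fromEdgeSet E' with hT'
  have hadj' : ∀ a b : V, T'.Adj a b ↔ ((T.Adj a b ∧ s(a, b) ≠ s(w, x)) ∨ s(a, b) = s(u, v)) := by
    intro a b
    rw [hT', SimpleGraph.fromEdgeSet_adj, hE']
    constructor
    · rintro ⟨h | h, hne⟩
      · exact Or.inl ⟨h.1, h.2⟩
      · exact Or.inr h
    · rintro (⟨h1, h2⟩ | h)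
      · exact ⟨Or.inl ⟨h1, h2⟩, h1.ne⟩
      · refine ⟨Or.inr h, ?_⟩
        rw [Sym2.eq_iff] at h
        rcases h with ⟨rfl, rfl⟩ | ⟨rfl, rfl⟩
        · exact huv
        · exact Ne.symm huv
  have hT'uv : T'.Adj u v := (hadj' u v).mpr (Or.inr rfl)
  have hT'G : T' ≤ G := by
    intro a b hab
    rw [hadj'] at hab
    rcases hab with ⟨h, _⟩ | h
    · exact hTG h
    · rw [Sym2.eq_iff] at h
      rcases h with ⟨rfl, rfl⟩ | ⟨rfl, rfl⟩
      · exact hGuv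
      · exact hGuv.symm
  -- edges of r and d avoid s(w,x)
  have her : s(w, x) ∉ r.edges := by
    have htrp : t.reverse.IsPath := htp.reverse
    rw [hr] at htrp
    have := htrp.isTrail.edges_nodup
    rw [Walk.edges_cons] at this
    exact (List.nodup_cons.mp this).1
  have hetd : s(w, x) ∈ t.edges := by
    have : s(w, x) ∈ t.reverse.edges := by rw [hr]; simp
    rwa [Walk.edges_reverse, List.mem_reverse] at this
  have hed : s(w, x) ∉ d.edges := by
    have := hp.isTrail.edges_nodup
    rw [← Walk.take_spec p hwp, Walk.edges_append] at this
    exact fun h => (List.disjoint_of_nodup_append this) hetd h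
  -- transfers
  have hrT' : ∀ e ∈ r.edges, e ∈ T'.edgeSet := by
    intro e he
    rw [hT', SimpleGraph.edgeSet_fromEdgeSet, hE']
    have heT : e ∈ T.edgeSet := r.edges_subset_edgeSet he
    refine ⟨Or.inl ⟨heT, fun h => her (h ▸ he)⟩, ?_⟩
    exact T.not_isDiag_of_mem_edgeSet heT
  have hdT' : ∀ e ∈ d.edges, e ∈ T'.edgeSet := by
    intro e he
    rw [hT', SimpleGraph.edgeSet_fromEdgeSet, hE']
    have heT : e ∈ T.edgeSet := d.edges_subset_edgeSet he
    refine ⟨Or.inl ⟨heT, fun h => hed (h ▸ he)⟩, ?_⟩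
    exact T.not_isDiag_of_mem_edgeSet heT
  -- connectivity of T'
  have hkey : ∀ a b : V, T.Adj a b → T'.Reachable a b := by
    intro a b hab
    by_cases hg : s(a, b) = s(w, x)
    · have hwxreach : T'.Reachable w x :=
        ((d.transfer T' hdT').reachable.trans hT'uv.reachable.symm).trans
          (r.transfer T' hrT').reachable.symm
      rw [Sym2.eq_iff] at hg
      rcases hg with ⟨rfl, rfl⟩ | ⟨rfl, rfl⟩
      · exact hwxreach
      · exact hwxreach.symm
    · exact ((hadj' a b).mpr (Or.inl ⟨hab, hg⟩)).reachable
  have hreach : ∀ (a b : V), T.Walk a b → T'.Reachable a b := by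
    intro a b q
    induction q with
    | nil => exact Reachable.refl _
    | cons h q ih => exact (hkey _ _ h).trans ih
  have hT'conn : T'.Connected := by
    rw [connected_iff_exists_forall_reachable]
    exact ⟨u, fun z => hreach u z (hTtree.isConnected.preconnected u z).some⟩
  -- acyclicity of T'
  have hT'acyc : T'.IsAcyclic := by
    intro a c hc
    by_cases hfc : s(u, v) ∈ c.edges
    · have hreach2 : (T'.deleteEdges {s(u, v)}).Reachable u v :=
        (adj_and_reachable_delete_edges_iff_exists_cycle.mpr ⟨a, c, hc, hfc⟩).2
      rw [reachable_delete_edges_iff_exists_walk] at hreach2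
      obtain ⟨q, hq⟩ := hreach2
      have hqT : ∀ e ∈ q.edges, e ∈ T.edgeSet := by
        intro e he
        have hmem := q.edges_subset_edgeSet he
        rw [hT', SimpleGraph.edgeSet_fromEdgeSet, hE'] at hmem
        rcases hmem.1 with h | h
        · exact h.1
        · exact absurd (Set.mem_singleton_iff.mp h) (fun hh => hq (hh ▸ he))
      have hq'e : s(w, x) ∉ (q.transfer T hqT).edges := by
        rw [Walk.edges_transfer]
        intro he
        have hmem := q.edges_subset_edgeSet he
        rw [hT', SimpleGraph.edgeSet_fromEdgeSet, hE'] at hmem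
        rcases hmem.1 with h | h
        · exact h.2 rfl
        · exact hef (Set.mem_singleton_iff.mp h).symm
      have heq := hpuniq (q.transfer T hqT).bypass (q.transfer T hqT).bypass_isPath
      have hep : s(w, x) ∈ p.edges := Walk.edges_takeUntil_subset p hwp hetd
      rw [← heq] at hep
      exact hq'e ((q.transfer T hqT).edges_bypass_subset hep)
    · have hcT : ∀ e ∈ c.edges, e ∈ T.edgeSet := by
        intro e he
        have hmem := c.edges_subset_edgeSet he
        rw [hT', SimpleGraph.edgeSet_fromEdgeSet, hE'] at hmem
        rcases hmem.1 with h | h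
        · exact h.1
        · exact absurd (Set.mem_singleton_iff.mp h) (fun hh => hfc (hh ▸ he))
      exact hTtree.IsAcyclic (c.transfer T hcT) (hc.transfer hcT)
  have hT'tree : T'.IsTree := (SimpleGraph.isTree_iff T').mpr ⟨hT'conn, hT'acyc⟩
  -- neighbor set computations
  have hNv : T'.neighborSet v = insert u (T.neighborSet v) := by
    ext b
    simp only [mem_neighborSet, Set.mem_insert_iff]
    rw [hadj']
    constructor
    · rintro (⟨h1, _⟩ | h)
      · exact Or.inr h1
      · rw [Sym2.eq_iff] at h
        rcases h with ⟨h1, h2⟩ | ⟨h1, h2⟩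
        · exact absurd h1.symm huv
        · exact Or.inl h2
    · rintro (rfl | h)
      · exact Or.inr (by rw [Sym2.eq_iff]; exact Or.inr ⟨rfl, rfl⟩)
      · refine Or.inl ⟨h, fun hh => ?_⟩
        rw [Sym2.eq_iff] at hh
        rcases hh with ⟨h1, h2⟩ | ⟨h1, h2⟩
        · exact hwv h1.symm
        · exact hxv h1.symm
  have hNvcard : (T'.neighborSet v).ncard = 2 := by
    rw [hNv, Set.ncard_insert_of_notMem (fun h => hTuv (mem_neighborSet T v u |>.mp h).symm), hv]
  have hNw : T'.neighborSet w = T.neighborSet w \ {x} := by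
    ext b
    simp only [mem_neighborSet, Set.mem_diff, Set.mem_singleton_iff]
    rw [hadj']
    constructor
    · rintro (⟨h1, h2⟩ | h)
      · refine ⟨h1, fun hh => h2 ?_⟩
        rw [Sym2.eq_iff]; exact Or.inl ⟨rfl, hh⟩
      · rw [Sym2.eq_iff] at h
        rcases h with ⟨h1, h2⟩ | ⟨h1, h2⟩
        · exact absurd h1 hwu
        · exact absurd h1 hwv
    · rintro ⟨h1, h2⟩
      refine Or.inl ⟨h1, fun hh => ?_⟩
      rw [Sym2.eq_iff] at hh
      rcases hh with ⟨hh1, hh2⟩ | ⟨hh1, hh2⟩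
      · exact h2 hh2
      · exact hxw hh1.symm
  have hNwcard : (T'.neighborSet w).ncard = (T.neighborSet w).ncard - 1 := by
    rw [hNw, Set.ncard_diff_singleton_of_mem (mem_neighborSet T w x |>.mpr hwx)]
  have hNother : ∀ z : V, z ≠ u → z ≠ v → z ≠ w → z ≠ x →
      T'.neighborSet z = T.neighborSet z := by
    intro z h1 h2 h3 h4
    ext b
    simp only [mem_neighborSet]
    rw [hadj']
    constructor
    · rintro (⟨hh, _⟩ | hh)
      · exact hh
      · rw [Sym2.eq_iff] at hh
        rcases hh with ⟨e1, e2⟩ | ⟨e1, e2⟩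
        · exact absurd e1 h1
        · exact absurd e1 h2
    · intro hh
      refine Or.inl ⟨hh, fun he => ?_⟩
      rw [Sym2.eq_iff] at he
      rcases he with ⟨e1, e2⟩ | ⟨e1, e2⟩
      · exact h3 e1
      · exact h4 e1
  -- apply minimality
  have hminT' := hmin _ ⟨T', hT'G, hT'tree, rfl⟩
  set L := {z : V | (T.neighborSet z).ncard = 1} with hL
  set L' := {z : V | (T'.neighborSet z).ncard = 1} with hL'
  have hzv : ∀ z ∈ L', z ≠ v := by
    intro z hz heq
    have h : (T'.neighborSet z).ncard = 1 := hz
    rw [heq, hNvcard] at h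
    omega
  have hzw : ∀ z ∈ L', z ≠ w := by
    intro z hz heq
    have h : (T'.neighborSet z).ncard = 1 := hz
    rw [heq, hNwcard] at h
    omega
  by_cases hxu : x = u
  · have hsub : L' ⊆ L \ {v} := by
      intro z hz
      refine ⟨?_, hzv z hz⟩
      by_cases hzu : z = u
      · subst hzu; exact hu
      · have h : (T'.neighborSet z).ncard = 1 := hz
        show (T.neighborSet z).ncard = 1
        rw [← hNother z hzu (hzv z hz) (hzw z hz) (fun h => hzu (h.trans hxu))]
        exact h
    have hcard : (L \ {v}).ncard = k - 1 := by
      rw [Set.ncard_diff_singleton_of_mem (show v ∈ L from hv), hTk]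
    have : L'.ncard ≤ k - 1 := hcard ▸ Set.ncard_le_ncard hsub (Set.toFinite _)
    omega
  · have hNu : T'.neighborSet u = insert v (T.neighborSet u) := by
      ext b
      simp only [mem_neighborSet, Set.mem_insert_iff]
      rw [hadj']
      constructor
      · rintro (⟨h1, _⟩ | h)
        · exact Or.inr h1
        · rw [Sym2.eq_iff] at h
          rcases h with ⟨h1, h2⟩ | ⟨h1, h2⟩
          · exact Or.inl h2
          · exact absurd h1 huv
      · rintro (rfl | h)
        · exact Or.inr (by rw [Sym2.eq_iff]; exact Or.inl ⟨rfl, rfl⟩)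
        · refine Or.inl ⟨h, fun hh => ?_⟩
          rw [Sym2.eq_iff] at hh
          rcases hh with ⟨h1, h2⟩ | ⟨h1, h2⟩
          · exact hwu h1.symm
          · exact hxu h1.symm
    have hNucard : (T'.neighborSet u).ncard = 2 := by
      rw [hNu, Set.ncard_insert_of_notMem (fun h => hTuv (mem_neighborSet T u v |>.mp h)), hu]
    have hzu : ∀ z ∈ L', z ≠ u := by
      intro z hz heq
      have h : (T'.neighborSet z).ncard = 1 := hz
      rw [heq, hNucard] at h
      omega
    have hsub : L' ⊆ insert x ((L \ {u}) \ {v}) := by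
      intro z hz
      by_cases hzx : z = x
      · exact Or.inl hzx
      · refine Or.inr ⟨⟨?_, hzu z hz⟩, hzv z hz⟩
        have h : (T'.neighborSet z).ncard = 1 := hz
        show (T.neighborSet z).ncard = 1
        rw [← hNother z (hzu z hz) (hzv z hz) (hzw z hz) hzx]
        exact h
    have hcard : ((L \ {u}) \ {v}).ncard = k - 2 := by
      rw [Set.ncard_diff_singleton_of_mem (show v ∈ L \ {u} from ⟨hv, huv.symm⟩),
        Set.ncard_diff_singleton_of_mem (show u ∈ L from hu), hTk]
      omega
    have h1 : L'.ncard ≤ (insert x ((L \ {u}) \ {v})).ncard :=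
      Set.ncard_le_ncard hsub (Set.toFinite _)
    have h2 : (insert x ((L \ {u}) \ {v})).ncard ≤ k - 2 + 1 := by
      rw [← hcard]; exact Set.ncard_insert_le _ _
    omega
end

section
/- (Ore) Let G be a finite connected simple graph on n vertices. If for every pair of distinct nonadjacent vertices u, v of G one has deg(u) + deg(v) ≥ n − 1, then G has a Hamiltonian path. -/
set_option linter.unusedSectionVars false

open SimpleGraph Walk List

namespace OreAux

variable {V : Type*} [DecidableEq V] {G : SimpleGraph V}

lemma getVert_injOn' {u v : V} (p : G.Walk u v) (hp : p.IsPath) :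
    ∀ i, i ≤ p.length → ∀ j, j ≤ p.length → p.getVert i = p.getVert j → i = j := by
  induction p with
  | nil => intro i hi j hj _; simp at hi hj; omega
  | cons h q ih =>
    rw [Walk.cons_isPath_iff] at hp
    intro i hi j hj hij
    match i, j with
    | 0, 0 => rfl
    | 0, j+1 =>
      exfalso; apply hp.2
      rw [Walk.mem_support_iff_exists_getVert]
      exact ⟨j, by simpa using hij.symm, by simpa using hj⟩
    | i+1, 0 =>
      exfalso; apply hp.2
      rw [Walk.mem_support_iff_exists_getVert]
      exact ⟨i, by simpa using hij, by simpa using hi⟩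
    | i+1, j+1 =>
      have := ih hp.1 i (by simpa using hi) j (by simpa using hj) (by simpa using hij)
      omega

lemma exists_boundary {a b : V} (q : G.Walk a b) (S : List V) (ha : a ∈ S) (hb : b ∉ S) :
    ∃ x y, x ∈ S ∧ y ∉ S ∧ G.Adj x y := by
  induction q with
  | nil => exact absurd ha hb
  | @cons a c b h q ih =>
    by_cases hc : c ∈ S
    · exact ih hc hb
    · exact ⟨a, c, ha, hc, h⟩

lemma length_rotate' {u x : V} (c : G.Walk u u) (hx : x ∈ c.support) :
    (c.rotate x hx).length = c.length := by
  have := congrArg Walk.length (c.take_spec hx)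
  rw [Walk.length_append] at this
  rw [Walk.rotate, Walk.length_append]
  omega

/-- Rotate-and-extend: from a closed walk with nodup support-tail and a vertex on it
adjacent to a vertex off it, produce a path of length `c.length` ending at `y`. -/
lemma rotate_extend {u x y : V} (c : G.Walk u u) (hc : c.support.tail.Nodup)
    (hnil : ¬ c.Nil) (hx : x ∈ c.support) (hy : y ∉ c.support) (hxy : G.Adj x y) :
    ∃ (a : V) (q : G.Walk a y), q.IsPath ∧ q.length = c.length := by
  set c' := c.rotate x hx with hc'
  have hrot := c.support_rotate x hx
  have hlen : c'.length = c.length := length_rotate' c hx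
  have hnil' : ¬ c'.Nil := by
    rw [Walk.nil_iff_length_eq] at hnil ⊢
    omega
  have htail : c'.tail.support = c'.support.tail := c'.support_tail_of_not_nil hnil'
  have htnodup : c'.tail.support.Nodup := by
    rw [htail, hrot.nodup_iff]; exact hc
  have hysupp : y ∉ c'.tail.support := by
    rw [htail, hrot.mem_iff]
    exact fun h => hy (List.mem_of_mem_tail h)
  refine ⟨c'.getVert 1, c'.tail.concat hxy, ?_, ?_⟩
  · apply Walk.IsPath.mk'
    rw [Walk.support_concat]
    exact List.Nodup.append htnodup (List.nodup_singleton y)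
      (by simpa using hysupp)
  · rw [Walk.length_concat]
    have := Walk.length_tail_add_one hnil'
    omega

/-- Rotation construction: a crossing pair yields a closed walk through exactly the
support of `p`, of length `p.length + 1`. -/
lemma crossing_cycle {u v : V} (p : G.Walk u v) (hp : p.IsPath) {i : ℕ}
    (hik : i < p.length) (h1 : G.Adj u (p.getVert (i+1))) (h2 : G.Adj v (p.getVert i)) :
    ∃ c : G.Walk u u, c.support.tail.Nodup ∧ c.length = p.length + 1 ∧
      (∀ z, z ∈ c.support ↔ z ∈ p.support) := by
  set k := p.length with hk
  set x₀ := p.getVert i with hx0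
  have hx₀ : x₀ ∈ p.support := Walk.mem_support_iff_exists_getVert.2 ⟨i, rfl, hik.le⟩
  set q1 := p.takeUntil x₀ hx₀ with hq1def
  set q2 := p.dropUntil x₀ hx₀ with hq2def
  have hspec : q1.append q2 = p := p.take_spec hx₀
  have hlensum : q1.length + q2.length = k := by
    have := congrArg Walk.length hspec
    simpa [Walk.length_append] using this
  have hq1le : q1.length ≤ k := p.length_takeUntil_le hx₀
  have hq1 : q1.length = i := by
    have h : p.getVert q1.length = x₀ := by
      conv_lhs => rw [← hspec]
      rw [Walk.getVert_append, if_neg (lt_irrefl _)]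
      simp
    exact getVert_injOn' p hp q1.length hq1le i hik.le h
  have hq2nil : ¬ q2.Nil := by rw [Walk.nil_iff_length_eq]; omega
  have hv1 : q2.getVert 1 = p.getVert (i+1) := by
    have h6 : (q1.append q2).getVert (i+1) = q2.getVert (i+1 - q1.length) := by
      rw [Walk.getVert_append, if_neg (by omega)]
    rw [hspec] at h6
    rw [h6, hq1]
    congr 1
    omega
  set q3 := q2.tail with hq3def
  have h1' : G.Adj (q2.getVert 1) u := hv1 ▸ h1.symm
  set c : G.Walk u u :=
    q1.append (Walk.cons h2.symm ((q3.reverse).append (Walk.cons h1' Walk.nil))) with hcdef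
  have hq2sup : q2.support = x₀ :: q3.support := (Walk.cons_support_tail hq2nil).symm
  have hps : p.support = q1.support ++ q3.support := by
    rw [← hspec, Walk.support_append, hq2sup]
    rfl
  have hcs : c.support = q1.support ++ (q3.support.reverse ++ [u]) := by
    rw [hcdef, Walk.support_append, Walk.support_cons, List.tail_cons, Walk.support_append,
      Walk.support_reverse]
    simp
  have hpn := hp.support_nodup
  rw [hps, List.nodup_append] at hpn
  obtain ⟨hq1n, hq3n, hdisj⟩ := hpn
  have hu1 : u ∈ q1.support := q1.start_mem_support
  have hq1cons : q1.support = u :: q1.support.tail := q1.support_eq_cons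
  have hutail : u ∉ q1.support.tail := by
    have := hq1n
    rw [hq1cons] at this
    exact (List.nodup_cons.1 this).1
  refine ⟨c, ?_, ?_, ?_⟩
  · rw [hcs, hq1cons, List.cons_append, List.tail_cons]
    rw [List.nodup_append]
    refine ⟨(hq1cons ▸ hq1n : (u :: q1.support.tail).Nodup).of_cons, ?_, ?_⟩
    · rw [List.nodup_append]
      refine ⟨List.nodup_reverse.2 hq3n, List.nodup_singleton u, ?_⟩
      intro a ha b hb hab
      rw [List.mem_singleton] at hb
      exact hdisj u hu1 a (List.mem_reverse.1 ha) (hab.trans hb).symm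
    · intro a ha b hmem hab
      rcases List.mem_append.1 hmem with h' | h'
      · exact hdisj a (List.mem_of_mem_tail ha) b (List.mem_reverse.1 h') hab
      · rw [List.mem_singleton] at h'
        rw [hab, h'] at ha
        exact hutail ha
  · have hq3len : q3.length + 1 = q2.length := Walk.length_tail_add_one hq2nil
    rw [hcdef]
    simp only [Walk.length_append, Walk.length_cons, Walk.length_reverse, Walk.length_nil]
    omega
  · intro z
    rw [hcs, hps]
    simp only [List.mem_append, List.mem_reverse, List.mem_singleton]
    constructor
    · rintro (h' | h' | rfl)
      · exact Or.inl h'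
      · exact Or.inr h'
      · exact Or.inl hu1
    · rintro (h' | h')
      · exact Or.inl h'
      · exact Or.inr (Or.inl h')

variable [Fintype V]

/-- existence of a maximal-length path -/
lemma exists_max_path [Nonempty V] (G : SimpleGraph V) :
    ∃ (u v : V) (p : G.Walk u v), p.IsPath ∧
      ∀ (a b : V) (q : G.Walk a b), q.IsPath → q.length ≤ p.length := by
  classical
  set L := (Finset.range (Fintype.card V)).filter
    (fun n => ∃ (a b : V) (q : G.Walk a b), q.IsPath ∧ q.length = n) with hL
  have h0 : (0 : ℕ) ∈ L := by
    rw [hL, Finset.mem_filter]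
    exact ⟨Finset.mem_range.2 Fintype.card_pos,
      Classical.arbitrary V, Classical.arbitrary V, Walk.nil, Walk.IsPath.nil, rfl⟩
  obtain ⟨-, a, b, p, hp, hlen⟩ := Finset.mem_filter.1 (L.max'_mem ⟨0, h0⟩)
  refine ⟨a, b, p, hp, fun c d q hq => ?_⟩
  rw [hlen]
  exact Finset.le_max' L q.length (Finset.mem_filter.2
    ⟨Finset.mem_range.2 hq.length_lt, c, d, q, hq, rfl⟩)

lemma card_start [DecidableRel G.Adj] {u v : V} (p : G.Walk u v) (hp : p.IsPath)
    (hN : ∀ z, G.Adj u z → z ∈ p.support) :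
    ((Finset.range p.length).filter (fun i => G.Adj u (p.getVert (i+1)))).card
      = G.degree u := by
  rw [← card_neighborFinset_eq_degree]
  apply Finset.card_bij (fun i _ => p.getVert (i+1))
  · intro a ha
    rw [mem_neighborFinset]
    exact (Finset.mem_filter.1 ha).2
  · intro a ha b hb hab
    rw [Finset.mem_filter, Finset.mem_range] at ha hb
    have := getVert_injOn' p hp (a+1) (by omega) (b+1) (by omega) hab
    omega
  · intro b hb
    rw [mem_neighborFinset] at hb
    obtain ⟨j, hj1, hj2⟩ := Walk.mem_support_iff_exists_getVert.1 (hN b hb)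
    have hj0 : j ≠ 0 := by
      rintro rfl
      rw [Walk.getVert_zero] at hj1
      subst hj1
      exact G.irrefl hb
    obtain ⟨m, rfl⟩ := Nat.exists_eq_succ_of_ne_zero hj0
    exact ⟨m, Finset.mem_filter.2 ⟨Finset.mem_range.2 (by omega), by rw [hj1]; exact hb⟩, hj1⟩

lemma card_end [DecidableRel G.Adj] {u v : V} (p : G.Walk u v) (hp : p.IsPath)
    (hN : ∀ z, G.Adj v z → z ∈ p.support) :
    ((Finset.range p.length).filter (fun i => G.Adj v (p.getVert i))).card
      = G.degree v := by
  rw [← card_neighborFinset_eq_degree]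
  apply Finset.card_bij (fun i _ => p.getVert i)
  · intro a ha
    rw [mem_neighborFinset]
    exact (Finset.mem_filter.1 ha).2
  · intro a ha b hb hab
    rw [Finset.mem_filter, Finset.mem_range] at ha hb
    exact getVert_injOn' p hp a (by omega) b (by omega) hab
  · intro b hb
    rw [mem_neighborFinset] at hb
    obtain ⟨j, hj1, hj2⟩ := Walk.mem_support_iff_exists_getVert.1 (hN b hb)
    have hjk : j ≠ p.length := by
      rintro rfl
      rw [Walk.getVert_length] at hj1
      subst hj1
      exact G.irrefl hb
    exact ⟨j, Finset.mem_filter.2 ⟨Finset.mem_range.2 (by omega), by rw [hj1]; exact hb⟩, hj1⟩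

end OreAux

/-- (Ore) Let `G` be a finite connected simple graph on `n` vertices. If every pair of
distinct nonadjacent vertices `u, v` satisfies `deg u + deg v ≥ n - 1`, then `G` has a
Hamiltonian path. -/
theorem stmt_3 {V : Type*} [Fintype V] [DecidableEq V] (G : SimpleGraph V) [DecidableRel G.Adj]
    (hG : G.Connected)
    (hdeg : ∀ u v : V, u ≠ v → ¬ G.Adj u v →
      Fintype.card V - 1 ≤ G.degree u + G.degree v) :
    ∃ (u v : V) (p : G.Walk u v), p.IsHamiltonian := by
  classical
  haveI : Nonempty V := hG.nonempty
  obtain ⟨u, v, p, hp, hmax⟩ := OreAux.exists_max_path G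
  refine ⟨u, v, p, hp.isHamiltonian_of_mem ?_⟩
  by_contra hcon
  push_neg at hcon
  obtain ⟨w, hw⟩ := hcon
  -- every neighbor of u is on p
  have hNu : ∀ z, G.Adj u z → z ∈ p.support := by
    intro z hz
    by_contra hzs
    have hq : (Walk.cons hz.symm p).IsPath := hp.cons hzs
    have := hmax _ _ _ hq
    rw [Walk.length_cons] at this
    omega
  have hNv : ∀ z, G.Adj v z → z ∈ p.support := by
    intro z hz
    by_contra hzs
    have hq : (p.concat hz).IsPath := by
      apply Walk.IsPath.mk'
      rw [Walk.support_concat]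
      exact List.Nodup.append hp.support_nodup (List.nodup_singleton z) (by simpa using hzs)
    have := hmax _ _ _ hq
    rw [Walk.length_concat] at this
    omega
  -- boundary pair
  obtain ⟨x, y, hxs, hys, hxy⟩ := OreAux.exists_boundary ((hG.preconnected u w).some)
    p.support p.start_mem_support hw
  have hxu : x ≠ u := fun h => hys (hNu y (h ▸ hxy))
  have hxv : x ≠ v := fun h => hys (hNv y (h ▸ hxy))
  -- n ≥ k + 2
  have hcard : p.length + 2 ≤ Fintype.card V := by
    have h1 : p.support.toFinset ⊆ Finset.univ.erase w := by
      intro z hz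
      rw [Finset.mem_erase]
      exact ⟨fun h => hw (h ▸ List.mem_toFinset.1 hz), Finset.mem_univ z⟩
    have h2 := Finset.card_le_card h1
    rw [List.toFinset_card_of_nodup hp.support_nodup, Walk.length_support] at h2
    rw [Finset.card_erase_of_mem (Finset.mem_univ w), Finset.card_univ] at h2
    have : 1 ≤ Fintype.card V := Fintype.card_pos
    omega
  -- get the closed walk c through exactly the support of p
  obtain ⟨c, hcn, hclen, hcmem⟩ : ∃ c : G.Walk u u, c.support.tail.Nodup ∧
      c.length = p.length + 1 ∧ (∀ z, z ∈ c.support ↔ z ∈ p.support) := by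
    by_cases huv : G.Adj u v
    · refine ⟨p.concat huv.symm, ?_, Walk.length_concat _ _, ?_⟩
      · rw [Walk.support_concat, p.support_eq_cons,
          List.cons_append, List.tail_cons]
        have hn := hp.support_nodup
        rw [p.support_eq_cons, List.nodup_cons] at hn
        refine List.Nodup.append hn.2 (List.nodup_singleton u) ?_
        intro a ha hau
        rw [List.mem_singleton] at hau
        subst hau
        exact hn.1 ha
      · intro z
        rw [Walk.support_concat, List.mem_append, List.mem_singleton]
        constructor
        · rintro (h' | rfl)
          · exact h'
          · exact p.start_mem_support
        · exact Or.inl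
    · have huv' : u ≠ v := by
        rintro rfl
        rw [Walk.isPath_iff_eq_nil] at hp
        subst hp
        simp at hxs
        exact hxu hxs
      have hd := hdeg u v huv' huv
      set S := (Finset.range p.length).filter (fun i => G.Adj u (p.getVert (i+1))) with hSdef
      set T := (Finset.range p.length).filter (fun i => G.Adj v (p.getVert i)) with hTdef
      have hS : S.card = G.degree u := OreAux.card_start p hp hNu
      have hT : T.card = G.degree v := OreAux.card_end p hp hNv
      have hST : (S ∩ T).Nonempty := by
        rw [Finset.nonempty_iff_ne_empty]
        intro hempty
        have hun := Finset.card_union_add_card_inter S T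
        rw [hempty, Finset.card_empty] at hun
        have hsub : S ∪ T ⊆ Finset.range p.length := by
          rw [hSdef, hTdef]
          exact Finset.union_subset (Finset.filter_subset _ _) (Finset.filter_subset _ _)
        have := Finset.card_le_card hsub
        rw [Finset.card_range] at this
        omega
      obtain ⟨i, hi⟩ := hST
      rw [Finset.mem_inter, Finset.mem_filter, Finset.mem_filter, Finset.mem_range] at hi
      exact OreAux.crossing_cycle p hp hi.1.1 hi.1.2 hi.2.2
  -- rotate and extend to a longer path: contradiction
  have hxc : x ∈ c.support := (hcmem x).2 hxs
  have hyc : y ∉ c.support := fun h => hys ((hcmem y).1 h)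
  have hcnil : ¬ c.Nil := by rw [Walk.nil_iff_length_eq]; omega
  obtain ⟨a, q, hq, hqlen⟩ := OreAux.rotate_extend c hcn hcnil hxc hyc hxy
  have := hmax _ _ _ hq
  omega
end

section
/- (Bondy–Chvátal closure, Hamiltonian cycle) Let G be a finite simple graph on n vertices and let u and v be two distinct nonadjacent vertices of G with deg(u) + deg(v) ≥ n. Then G has a Hamiltonian cycle if and only if the graph G + uv obtained from G by adding the edge uv has a Hamiltonian cycle. -/
open SimpleGraph Walk List

private lemma bc_head_edge {V : Type*} [DecidableEq V] {G : SimpleGraph V} :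
    ∀ {x y z : V} (w : G.Walk x y), x ∉ w.support.tail → s(x, z) ∈ w.edges →
      ∃ (h : G.Adj x z) (r : G.Walk z y), w = Walk.cons h r := by
  intro x y z w hx he
  cases w with
  | nil => simp at he
  | cons h' r =>
    rw [Walk.edges_cons, List.mem_cons] at he
    rw [Walk.support_cons, List.tail_cons] at hx
    rcases he with he | he
    · rename_i c
      have hxc : x ≠ c := fun hxc => hx (hxc ▸ r.start_mem_support)
      have : z = c := by
        rcases Sym2.eq_iff.mp he with ⟨-, rfl⟩ | ⟨h1, h2⟩
        · rfl
        · exact absurd h1 hxc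
      subst this
      exact ⟨h', r, rfl⟩
    · exact absurd (Walk.fst_mem_support_of_mem_edges r he) hx

private lemma bc_dart_split {V : Type*} {G : SimpleGraph V} :
    ∀ {x y : V} (p : G.Walk x y) (d : G.Dart), d ∈ p.darts →
      ∃ (q : G.Walk x d.fst) (r : G.Walk d.snd y), p = q.append (Walk.cons d.adj r) := by
  intro x y p
  induction p with
  | nil => intro d hd; simp at hd
  | cons h' p ih =>
    intro d hd
    rw [Walk.darts_cons, List.mem_cons] at hd
    rcases hd with rfl | hd
    · exact ⟨Walk.nil, p, rfl⟩
    · obtain ⟨q, r, hqr⟩ := ih d hd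
      exact ⟨Walk.cons h' q, r, by rw [Walk.cons_append, ← hqr]⟩

private lemma bc_count_one {α : Type*} [DecidableEq α] {l : List α} (hn : l.Nodup) {a : α}
    (ha : a ∈ l) : l.count a = 1 := by
  have h1 := List.nodup_iff_count_le_one.mp hn a
  have h2 := List.count_pos_iff.mpr ha
  omega

private lemma bc_ore {V : Type*} [Fintype V] [DecidableEq V] (G : SimpleGraph V)
    [DecidableRel G.Adj] (u v : V) (huv : u ≠ v) (hadj : ¬ G.Adj u v)
    (hdeg : Fintype.card V ≤ G.degree u + G.degree v)
    (p : G.Walk u v) (hp : p.IsPath) (hall : ∀ w, w ∈ p.support) :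
    ∃ (a : V) (c : G.Walk a a), c.IsHamiltonianCycle := by
  set n := Fintype.card V with hn
  -- support length
  have hsupeq : p.support.toFinset = Finset.univ := by
    ext z; simp [hall z]
  have hsl : p.support.length = n := by
    rw [← List.toFinset_card_of_nodup hp.support_nodup, hsupeq, hn, Fintype.card]
  -- degree bounds give n ≥ 4
  have hdu : G.degree u ≤ n - 2 := by
    have hsub : G.neighborFinset u ⊆ Finset.univ \ {u, v} := by
      intro w hw
      rw [SimpleGraph.mem_neighborFinset] at hw
      simp only [Finset.mem_sdiff, Finset.mem_univ, Finset.mem_insert, Finset.mem_singleton,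
        true_and, not_or]
      exact ⟨fun h => G.irrefl (h ▸ hw), fun h => hadj (h ▸ hw)⟩
    have := Finset.card_le_card hsub
    rw [Finset.card_sdiff_of_subset (Finset.subset_univ _), Finset.card_pair huv, Finset.card_univ,
      SimpleGraph.card_neighborFinset_eq_degree] at this
    exact this
  have hdv : G.degree v ≤ n - 2 := by
    have hsub : G.neighborFinset v ⊆ Finset.univ \ {u, v} := by
      intro w hw
      rw [SimpleGraph.mem_neighborFinset] at hw
      simp only [Finset.mem_sdiff, Finset.mem_univ, Finset.mem_insert, Finset.mem_singleton,
        true_and, not_or]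
      exact ⟨fun h => hadj (h ▸ (hw.symm)), fun h => G.irrefl (h ▸ hw)⟩
    have := Finset.card_le_card hsub
    rw [Finset.card_sdiff_of_subset (Finset.subset_univ _), Finset.card_pair huv, Finset.card_univ,
      SimpleGraph.card_neighborFinset_eq_degree] at this
    exact this
  have hn2 : 2 ≤ n := by
    have h := Finset.card_le_univ ({u, v} : Finset V)
    rw [Finset.card_pair huv] at h
    omega
  have hn4 : 4 ≤ n := by omega
  have hplen : p.length = n - 1 := by
    have := p.length_support; omega
  -- the crossing dart
  have hdnodup : p.darts.Nodup := by
    have : (p.darts.map (·.snd)).Nodup := by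
      rw [p.map_snd_darts]
      exact hp.support_nodup.tail
    exact this.of_map _
  set S : Finset G.Dart := p.darts.toFinset with hS
  have hScard : S.card = n - 1 := by
    rw [hS, List.toFinset_card_of_nodup hdnodup, p.length_darts, hplen]
  set A : Finset G.Dart := S.filter (fun d => G.Adj u d.snd) with hA
  set B : Finset G.Dart := S.filter (fun d => G.Adj v d.fst) with hB
  have hAcard : A.card = G.degree u := by
    rw [← SimpleGraph.card_neighborFinset_eq_degree]
    apply Finset.card_bij (fun d _ => d.snd)
    · intro d hd
      rw [hA, Finset.mem_filter] at hd
      rw [SimpleGraph.mem_neighborFinset]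
      exact hd.2
    · intro d1 hd1 d2 hd2 hsnd
      rw [hA, Finset.mem_filter, hS, List.mem_toFinset] at hd1 hd2
      have : (p.darts.map (·.snd)).Nodup := by
        rw [p.map_snd_darts]; exact hp.support_nodup.tail
      exact List.inj_on_of_nodup_map this hd1.1 hd2.1 hsnd
    · intro w hw
      rw [SimpleGraph.mem_neighborFinset] at hw
      have hwu : w ≠ u := hw.ne'
      have hwsup : w ∈ p.support := hall w
      rw [p.support_eq_cons, List.mem_cons] at hwsup
      rcases hwsup with rfl | hwsup
      · exact absurd rfl hwu
      · rw [← p.map_snd_darts, List.mem_map] at hwsup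
        obtain ⟨d, hd, hds⟩ := hwsup
        exact ⟨d, by rw [hA, Finset.mem_filter, hS, List.mem_toFinset]
                     exact ⟨hd, hds ▸ hw⟩, hds⟩
  have hBcard : B.card = G.degree v := by
    rw [← SimpleGraph.card_neighborFinset_eq_degree]
    apply Finset.card_bij (fun d _ => d.fst)
    · intro d hd
      rw [hB, Finset.mem_filter] at hd
      rw [SimpleGraph.mem_neighborFinset]
      exact hd.2
    · intro d1 hd1 d2 hd2 hfst
      rw [hB, Finset.mem_filter, hS, List.mem_toFinset] at hd1 hd2
      have : (p.darts.map (·.fst)).Nodup := by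
        rw [p.map_fst_darts]
        exact hp.support_nodup.sublist (List.dropLast_sublist _)
      exact List.inj_on_of_nodup_map this hd1.1 hd2.1 hfst
    · intro w hw
      rw [SimpleGraph.mem_neighborFinset] at hw
      have hwv : w ≠ v := hw.ne'
      have hwsup : w ∈ p.support := hall w
      rw [← p.map_fst_darts_append, List.mem_append, List.mem_singleton] at hwsup
      rcases hwsup with hwsup | rfl
      · rw [List.mem_map] at hwsup
        obtain ⟨d, hd, hds⟩ := hwsup
        exact ⟨d, by rw [hB, Finset.mem_filter, hS, List.mem_toFinset]
                     exact ⟨hd, hds ▸ hw⟩, hds⟩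
      · exact absurd rfl hwv
  have hABsub : A ∪ B ⊆ S := by
    rw [hA, hB]
    exact Finset.union_subset (Finset.filter_subset _ _) (Finset.filter_subset _ _)
  have hinter : (A ∩ B).Nonempty := by
    rw [← Finset.card_pos]
    have h1 := Finset.card_inter_add_card_union A B
    have h2 := Finset.card_le_card hABsub
    omega
  obtain ⟨d, hdAB⟩ := hinter
  rw [Finset.mem_inter, hA, hB, Finset.mem_filter, Finset.mem_filter, hS,
    List.mem_toFinset] at hdAB
  obtain ⟨⟨hdmem, hua⟩, -, hvb⟩ := hdAB
  -- split the path at the dart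
  obtain ⟨q, r, hpeq⟩ := bc_dart_split p d hdmem
  have hpsup : p.support = q.support ++ r.support := by
    rw [hpeq, Walk.support_append, Walk.support_cons, List.tail_cons]
  -- the rotated walk
  set w : G.Walk u d.snd := (q.concat hvb.symm).append r.reverse with hw
  have hwsup : w.support = q.support ++ r.reverse.support := by
    rw [hw, Walk.support_append, Walk.support_concat, r.reverse.support_eq_cons]
    simp
  have hwperm : w.support.Perm p.support := by
    rw [hwsup, hpsup]
    exact List.Perm.append_left _ (by rw [Walk.support_reverse]; exact List.reverse_perm _)
  have hcount : ∀ z, w.support.count z = 1 := by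
    intro z
    rw [hwperm.count_eq]
    exact bc_count_one hp.support_nodup (hall z)
  have hwnodup : w.support.Nodup :=
    List.nodup_iff_count_le_one.mpr (fun z => (hcount z).le)
  have hwpath : w.IsPath := Walk.IsPath.mk' hwnodup
  have hwlen : w.support.length = n := by rw [hwperm.length_eq, hsl]
  have hne : s(d.snd, u) ∉ w.edges := by
    intro hmem
    rw [Sym2.eq_swap] at hmem
    have hut : u ∉ w.support.tail := by
      have hc := hcount u
      rw [w.support_eq_cons, List.count_cons_self] at hc
      exact List.count_eq_zero.mp (by omega)
    obtain ⟨h2, t, hweq⟩ := bc_head_edge w hut hmem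
    have htpath : t.IsPath ∧ u ∉ t.support := by
      rw [hweq, Walk.cons_isPath_iff] at hwpath
      exact hwpath
    have htnil : t = Walk.nil := (Walk.isPath_iff_eq_nil (p := t)).mp htpath.1
    have : w.support.length = 2 := by
      rw [hweq, htnil]
      simp
    omega
  refine ⟨d.snd, Walk.cons hua.symm w, ?_⟩
  rw [Walk.isHamiltonianCycle_iff_isCycle_and_support_count_tail_eq_one]
  constructor
  · exact (Walk.cons_isCycle_iff w hua.symm).mpr ⟨hwpath, hne⟩
  · intro z
    rw [Walk.support_cons, List.tail_cons]
    exact hcount z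

private lemma bc_extract {V : Type*} [DecidableEq V] {G' : SimpleGraph V} {u v : V}
    (_hne : u ≠ v) (d : G'.Walk u u) (hd : d.IsHamiltonianCycle) (he : s(u, v) ∈ d.edges) :
    ∃ (t : G'.Walk v u), t.IsPath ∧ (∀ z, z ∈ t.support) ∧ s(u, v) ∉ t.edges := by
  have hcounts : ∀ z, d.support.tail.count z = 1 :=
    ((Walk.isHamiltonianCycle_iff_isCycle_and_support_count_tail_eq_one).mp hd).2
  cases d with
  | nil => exact absurd rfl hd.isCycle.ne_nil
  | @cons _ w0 _ h t0 =>
    have hnodupE : (s(u, w0) :: t0.edges).Nodup := by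
      have := hd.isCycle.isTrail.edges_nodup
      rwa [Walk.edges_cons] at this
    have htail : (Walk.cons h t0).support.tail = t0.support := by
      rw [Walk.support_cons, List.tail_cons]
    have hcounts0 : ∀ z, t0.support.count z = 1 := fun z => htail ▸ hcounts z
    have hnodup0 : t0.support.Nodup :=
      List.nodup_iff_count_le_one.mpr (fun z => (hcounts0 z).le)
    have hall0 : ∀ z, z ∈ t0.support := fun z =>
      List.count_pos_iff.mp (by rw [hcounts0 z]; norm_num)
    rw [Walk.edges_cons, List.mem_cons] at he
    rcases he with he | he
    · obtain rfl : v = w0 := Sym2.congr_right.mp he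
      exact ⟨t0, Walk.IsPath.mk' hnodup0, hall0,
        he ▸ (List.nodup_cons.mp hnodupE).1⟩
    · -- the edge is elsewhere; u occurs at the end of t0
      have ht0nodupE : t0.edges.Nodup := (List.nodup_cons.mp hnodupE).2
      have huvne : s(u, v) ≠ s(u, w0) := by
        intro hcontra
        exact (List.nodup_cons.mp hnodupE).1 (hcontra ▸ he)
      have hu_rev : u ∉ t0.reverse.support.tail := by
        have : t0.reverse.support.Nodup := by
          rw [Walk.support_reverse]
          exact List.nodup_reverse.mpr hnodup0
        rw [t0.reverse.support_eq_cons] at this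
        exact (List.nodup_cons.mp this).1
      have he_rev : s(u, v) ∈ t0.reverse.edges := by
        rw [Walk.edges_reverse, List.mem_reverse]; exact he
      obtain ⟨h2, t2, heq⟩ := bc_head_edge t0.reverse hu_rev he_rev
      -- t2 : Walk v w0 ; candidate path : (cons h t2.reverse).reverse : Walk v u
      set t : G'.Walk v u := (Walk.cons h t2.reverse).reverse with ht
      have hperm : t.support.Perm t0.support := by
        have e1 : t.support = (u :: t2.reverse.support).reverse := by
          rw [ht, Walk.support_reverse, Walk.support_cons]
        have e2 : t0.support.reverse = u :: t2.support := by
          have := congrArg Walk.support heq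
          rwa [Walk.support_reverse, Walk.support_cons] at this
        calc t.support ~ u :: t2.reverse.support := e1 ▸ List.reverse_perm _
          _ ~ u :: t2.support := List.Perm.cons u
              (by rw [Walk.support_reverse]; exact List.reverse_perm _)
          _ = t0.support.reverse := e2.symm
          _ ~ t0.support := List.reverse_perm _
      have hnot : s(u, v) ∉ t.edges := by
        intro hmem
        rw [ht, Walk.edges_reverse, List.mem_reverse, Walk.edges_cons, List.mem_cons] at hmem
        rcases hmem with hmem | hmem
        · exact huvne hmem
        · rw [Walk.edges_reverse, List.mem_reverse] at hmem
          have e3 : t0.reverse.edges = s(u, v) :: t2.edges := by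
            rw [heq, Walk.edges_cons]
          have : t0.reverse.edges.Nodup := by
            rw [Walk.edges_reverse]; exact List.nodup_reverse.mpr ht0nodupE
          rw [e3, List.nodup_cons] at this
          exact this.1 hmem
      exact ⟨t, Walk.IsPath.mk' (hperm.nodup_iff.mpr hnodup0), fun z =>
        hperm.mem_iff.mpr (hall0 z), hnot⟩


/-- (Bondy–Chvátal, Hamiltonian cycle) Let `G` be a finite simple graph on `n` vertices and
let `u, v` be distinct nonadjacent vertices with `deg u + deg v ≥ n`. Then `G` has a
Hamiltonian cycle iff `G + uv` has a Hamiltonian cycle. -/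
theorem stmt_6 {V : Type*} [Fintype V] [DecidableEq V] (G : SimpleGraph V)
    [DecidableRel G.Adj] (u v : V) (huv : u ≠ v) (hadj : ¬ G.Adj u v)
    (hdeg : Fintype.card V ≤ G.degree u + G.degree v) :
    (∃ (a : V) (c : G.Walk a a), c.IsHamiltonianCycle) ↔
      (∃ (a : V) (c : (G ⊔ SimpleGraph.edge u v).Walk a a), c.IsHamiltonianCycle) := by
  constructor
  · rintro ⟨a, c, hc⟩
    exact ⟨a, c.map (SimpleGraph.Hom.ofLE le_sup_left), hc.map Function.bijective_id⟩
  · rintro ⟨a, c, hc⟩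
    by_cases he : s(u, v) ∈ c.edges
    · -- rotate the cycle to start at u, remove the edge uv, transfer, and apply Ore's rotation
      have humem : u ∈ c.support := hc.mem_support u
      set d := c.rotate u humem with hd
      have hdcyc : d.IsCycle := hc.isCycle.rotate humem
      have hdcounts : ∀ z, d.support.tail.count z = 1 := fun z => by
        rw [(Walk.support_rotate c u humem).perm.count_eq]
        exact ((Walk.isHamiltonianCycle_iff_isCycle_and_support_count_tail_eq_one).mp hc).2 z
      have hdham : d.IsHamiltonianCycle :=
        (Walk.isHamiltonianCycle_iff_isCycle_and_support_count_tail_eq_one).mpr ⟨hdcyc, hdcounts⟩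
      have hde : s(u, v) ∈ d.edges := (c.rotate_edges u humem).perm.mem_iff.mpr he
      obtain ⟨t, tpath, tall, tnot⟩ := bc_extract huv d hdham hde
      have hsub : ∀ e ∈ t.edges, e ∈ G.edgeSet := by
        intro e hee
        have h1 := t.edges_subset_edgeSet hee
        rw [SimpleGraph.edgeSet_sup, SimpleGraph.edge_edgeSet_of_ne huv] at h1
        rcases h1 with h1 | h1
        · exact h1
        · rw [Set.mem_singleton_iff] at h1
          exact absurd (h1 ▸ hee) tnot
      set t' : G.Walk u v := (t.transfer G hsub).reverse with ht'
      have ht'path : t'.IsPath := (tpath.transfer hsub).reverse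
      apply bc_ore G u v huv hadj hdeg t' ht'path
      intro z
      rw [ht', Walk.support_reverse, List.mem_reverse, Walk.support_transfer]
      exact tall z
    · -- the cycle avoids uv entirely: transfer it to G
      have hsub : ∀ e ∈ c.edges, e ∈ G.edgeSet := by
        intro e hee
        have h1 := c.edges_subset_edgeSet hee
        rw [SimpleGraph.edgeSet_sup, SimpleGraph.edge_edgeSet_of_ne huv] at h1
        rcases h1 with h1 | h1
        · exact h1
        · rw [Set.mem_singleton_iff] at h1
          exact absurd (h1 ▸ hee) he
      obtain ⟨hcyc, hcnt⟩ :=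
        (Walk.isHamiltonianCycle_iff_isCycle_and_support_count_tail_eq_one).mp hc
      refine ⟨a, c.transfer G hsub, ?_⟩
      rw [Walk.isHamiltonianCycle_iff_isCycle_and_support_count_tail_eq_one]
      refine ⟨?_, ?_⟩
      · rw [Walk.isCycle_def]
        refine ⟨?_, ?_, ?_⟩
        · rw [Walk.isTrail_def, Walk.edges_transfer]
          exact hcyc.isTrail.edges_nodup
        · intro hnil
          have h3 := hcyc.three_le_length
          have h4 := congrArg Walk.support hnil
          rw [Walk.support_transfer, Walk.support_nil] at h4
          have h5 := c.length_support
          rw [h4] at h5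
          simp only [List.length_singleton] at h5
          omega
        · rw [Walk.support_transfer]
          exact hcyc.support_nodup
      · intro z
        rw [Walk.support_transfer]
        exact hcnt z
end

section
/- There exists a finite connected 3-regular simple graph on 16 vertices that has a spanning tree with exactly 3 leaves but has no spanning tree with fewer than 3 leaves (in particular, it has no Hamiltonian path). -/
open SimpleGraph

section AuxTree

variable {V : Type*}

lemma aux_detour {G : SimpleGraph V} {u v : V}
    (h : (G \ SimpleGraph.fromEdgeSet {s(u,v)}).Reachable u v) {x y : V}
    (hxy : G.Reachable x y) : (G \ SimpleGraph.fromEdgeSet {s(u,v)}).Reachable x y := by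
  obtain ⟨p⟩ := hxy
  induction p with
  | nil => exact Reachable.refl _
  | cons a q ih =>
    rename_i x' z' y'
    by_cases he : s(x', z') = s(u, v)
    · rw [Sym2.eq_iff] at he
      rcases he with ⟨rfl, rfl⟩ | ⟨rfl, rfl⟩
      · exact h.trans ih
      · exact h.symm.trans ih
    · refine (Adj.reachable ?_).trans ih
      refine ⟨a, ?_⟩
      rw [fromEdgeSet_adj]
      rintro ⟨hmem, -⟩
      exact he hmem

lemma aux_del [Fintype V] (G : SimpleGraph V) (hc : G.Connected) (hnac : ¬ G.IsAcyclic) :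
    ∃ G' : SimpleGraph V, G'.Connected ∧ G'.edgeSet.ncard + 1 = G.edgeSet.ncard := by
  rw [SimpleGraph.IsAcyclic] at hnac
  push_neg at hnac
  obtain ⟨v, c, hcyc⟩ := hnac
  have hlen : c.edges ≠ [] := by
    have h3 := hcyc.three_le_length
    intro h
    rw [← SimpleGraph.Walk.length_edges, h] at h3
    simp at h3
  obtain ⟨e, hemem⟩ : ∃ e, e ∈ c.edges := by
    cases h : c.edges with
    | nil => exact absurd h hlen
    | cons a l => exact ⟨a, h ▸ List.mem_cons_self (a := a) (l := l)⟩
  have heG : e ∈ G.edgeSet := c.edges_subset_edgeSet hemem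
  have hnb : ¬ G.IsBridge e := by
    rw [isBridge_iff_forall_cycle_notMem heG]
    intro hall
    exact hall c hcyc hemem
  induction e with
  | h u w =>
    have hadj : G.Adj u w := (SimpleGraph.mem_edgeSet G).mp heG
    have hreach : (G \ SimpleGraph.fromEdgeSet {s(u,w)}).Reachable u w := by
      by_contra hnr
      exact hnb hnr
    haveI : Nonempty V := hc.nonempty
    refine ⟨G \ SimpleGraph.fromEdgeSet {s(u,w)}, SimpleGraph.Connected.mk (fun x y => aux_detour hreach (hc.preconnected x y)), ?_⟩
    have hes : (G \ SimpleGraph.fromEdgeSet {s(u,w)}).edgeSet = G.edgeSet \ {s(u,w)} := by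
      simp [edgeSet_sdiff, edgeSet_fromEdgeSet, edgeSet_sdiff_sdiff_isDiag]
    rw [hes]
    exact Set.ncard_diff_singleton_add_one heG (Set.toFinite _)

lemma aux_card_le [Fintype V] :
    ∀ (m : ℕ) (G : SimpleGraph V), G.edgeSet.ncard = m → G.Connected →
      Fintype.card V ≤ m + 1 := by
  intro m
  induction m using Nat.strong_induction_on with
  | _ m ih =>
    intro G hm hc
    by_cases hac : G.IsAcyclic
    · have ht : G.IsTree := ⟨hc, hac⟩
      classical
      have h2 := ht.card_edgeFinset
      rw [← coe_edgeFinset, Set.ncard_coe_finset] at hm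
      omega
    · obtain ⟨G', hG'c, hG'card⟩ := aux_del G hc hac
      have hlt : G'.edgeSet.ncard < m := by omega
      have := ih _ hlt G' rfl hG'c
      omega

lemma aux_istree [Fintype V] (G : SimpleGraph V) (hc : G.Connected)
    (h : G.edgeSet.ncard + 1 = Fintype.card V) : G.IsTree := by
  by_cases hac : G.IsAcyclic
  · exact ⟨hc, hac⟩
  · obtain ⟨G', hG'c, hG'card⟩ := aux_del G hc hac
    have := aux_card_le _ G' rfl hG'c
    omega

end AuxTree

/-- Edge list of the cubic graph: three gadgets (each a `K₄` with one edge subdivided)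
attached by bridges to a central vertex `15`. -/
def gL : List (Fin 16 × Fin 16) :=
  [(0,2),(0,3),(1,2),(1,3),(2,3),(0,4),(1,4),(4,15),
   (5,7),(5,8),(6,7),(6,8),(7,8),(5,9),(6,9),(9,15),
   (10,12),(10,13),(11,12),(11,13),(12,13),(10,14),(11,14),(14,15)]

/-- Edge list of a spanning tree with three leaves. -/
def tL : List (Fin 16 × Fin 16) :=
  [(4,0),(0,2),(2,1),(1,3),(4,15),
   (9,5),(5,7),(7,6),(6,8),(9,15),
   (14,10),(10,12),(12,11),(11,13),(14,15)]

def myG : SimpleGraph (Fin 16) := SimpleGraph.fromRel (fun x y => (x, y) ∈ gL)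
def myT : SimpleGraph (Fin 16) := SimpleGraph.fromRel (fun x y => (x, y) ∈ tL)

instance : DecidableRel myG.Adj := fun x y =>
  decidable_of_iff' _ (SimpleGraph.fromRel_adj _ x y)
instance : DecidableRel myT.Adj := fun x y =>
  decidable_of_iff' _ (SimpleGraph.fromRel_adj _ x y)

lemma ncard_neighborSet_eq_degree {V : Type*} [Fintype V] (G : SimpleGraph V)
    [DecidableRel G.Adj] (v : V) : (G.neighborSet v).ncard = G.degree v := by
  rw [← card_neighborFinset_eq_degree, ← Set.ncard_coe_finset (G.neighborFinset v),
    neighborFinset_def, Set.coe_toFinset]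

lemma myT_connected : myT.Connected := by
  have h : ∀ a b : Fin 16, myT.Adj a b → myT.Reachable a b := fun a b h => h.reachable
  have hr : ∀ v : Fin 16, myT.Reachable v 15 := by
    intro v
    fin_cases v <;> [
      exact ((h 0 4 (by decide)).trans (h 4 15 (by decide)));
      exact ((h 1 2 (by decide)).trans ((h 2 0 (by decide)).trans ((h 0 4 (by decide)).trans (h 4 15 (by decide)))));
      exact ((h 2 0 (by decide)).trans ((h 0 4 (by decide)).trans (h 4 15 (by decide))));
      exact ((h 3 1 (by decide)).trans ((h 1 2 (by decide)).trans ((h 2 0 (by decide)).trans ((h 0 4 (by decide)).trans (h 4 15 (by decide))))));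
      exact (h 4 15 (by decide));
      exact ((h 5 9 (by decide)).trans (h 9 15 (by decide)));
      exact ((h 6 7 (by decide)).trans ((h 7 5 (by decide)).trans ((h 5 9 (by decide)).trans (h 9 15 (by decide)))));
      exact ((h 7 5 (by decide)).trans ((h 5 9 (by decide)).trans (h 9 15 (by decide))));
      exact ((h 8 6 (by decide)).trans ((h 6 7 (by decide)).trans ((h 7 5 (by decide)).trans ((h 5 9 (by decide)).trans (h 9 15 (by decide))))));
      exact (h 9 15 (by decide));
      exact ((h 10 14 (by decide)).trans (h 14 15 (by decide)));
      exact ((h 11 12 (by decide)).trans ((h 12 10 (by decide)).trans ((h 10 14 (by decide)).trans (h 14 15 (by decide)))));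
      exact ((h 12 10 (by decide)).trans ((h 10 14 (by decide)).trans (h 14 15 (by decide))));
      exact ((h 13 11 (by decide)).trans ((h 11 12 (by decide)).trans ((h 12 10 (by decide)).trans ((h 10 14 (by decide)).trans (h 14 15 (by decide))))));
      exact (h 14 15 (by decide));
      exact Reachable.refl 15]
  exact SimpleGraph.Connected.mk (fun u v => (hr u).trans (hr v).symm)

lemma myT_le_myG : myT ≤ myG :=
  fun {v w} h => (by decide : ∀ v w : Fin 16, myT.Adj v w → myG.Adj v w) v w h

lemma myT_istree : myT.IsTree := by
  apply aux_istree myT myT_connected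
  rw [Set.ncard_eq_toFinset_card' myT.edgeSet]
  show myT.edgeFinset.card + 1 = _
  rw [(by decide : myT.edgeFinset.card = 15)]
  simp

/-- There exists a finite connected `3`-regular simple graph on `16` vertices that has a
spanning tree with exactly `3` leaves but no spanning tree with fewer than `3` leaves. -/
theorem stmt_8 :
    ∃ G : SimpleGraph (Fin 16), G.Connected ∧ (∀ w : Fin 16, (G.neighborSet w).ncard = 3) ∧
      (∃ T : SimpleGraph (Fin 16), T ≤ G ∧ T.IsTree ∧
        {v : Fin 16 | (T.neighborSet v).ncard = 1}.ncard = 3) ∧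
      (∀ T : SimpleGraph (Fin 16), T ≤ G → T.IsTree →
        3 ≤ {v : Fin 16 | (T.neighborSet v).ncard = 1}.ncard) := by
  refine ⟨myG, myT_connected.mono myT_le_myG, ?_, ⟨myT, myT_le_myG, myT_istree, ?_⟩, ?_⟩
  · intro w
    rw [ncard_neighborSet_eq_degree]
    revert w
    decide
  · have hconv : ∀ v : Fin 16, (myT.neighborSet v).ncard = myT.degree v :=
      ncard_neighborSet_eq_degree myT
    simp only [hconv]
    rw [Set.ncard_eq_toFinset_card', Set.toFinset_setOf]
    decide
  · -- key decidable facts about myG (proved before going classical)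
    have hkey1 : ∀ x y : Fin 16, x.val < 5 → ¬ y.val < 5 → myG.Adj x y →
        x = 4 ∧ y = 15 := by decide
    have hkey2 : ∀ x y : Fin 16, (4 < x.val ∧ x.val < 10) → ¬ (4 < y.val ∧ y.val < 10) →
        myG.Adj x y → x = 9 ∧ y = 15 := by decide
    have hkey3 : ∀ x y : Fin 16, (9 < x.val ∧ x.val < 15) → ¬ (9 < y.val ∧ y.val < 15) →
        myG.Adj x y → x = 14 ∧ y = 15 := by decide
    have hGdeg : ∀ v : Fin 16, (myG.neighborFinset v).card = 3 := by decide
    classical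
    intro T hTG hTtree
    -- bridges are forced into T
    have getBridge : ∀ (a : Fin 16) (P : Fin 16 → Prop), P a → ¬ P 15 →
        (∀ x y : Fin 16, P x → ¬ P y → myG.Adj x y → x = a ∧ y = 15) → T.Adj a 15 := by
      intro a P haP h15 hkey
      obtain ⟨p⟩ := hTtree.isConnected.preconnected a 15
      obtain ⟨dr, -, h1, h2⟩ := p.exists_boundary_dart {v | P v} haP h15
      obtain ⟨e1, e2⟩ := hkey dr.toProd.1 dr.toProd.2 h1 h2 (hTG dr.adj)
      have := dr.adj
      rw [e1, e2] at this
      exact this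
    have hb1 : T.Adj 4 15 := getBridge 4 (fun v => v.val < 5) (by decide) (by decide) hkey1
    have hb2 : T.Adj 9 15 := getBridge 9 (fun v => 4 < v.val ∧ v.val < 10) (by decide) (by decide) hkey2
    have hb3 : T.Adj 14 15 := getBridge 14 (fun v => 9 < v.val ∧ v.val < 15) (by decide) (by decide) hkey3
    -- degree of the centre is at least 3
    have hc3 : 3 ≤ T.degree 15 := by
      have hsub : ({4, 9, 14} : Finset (Fin 16)) ⊆ T.neighborFinset 15 := by
        intro x hx
        simp only [Finset.mem_insert, Finset.mem_singleton] at hx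
        rw [mem_neighborFinset]
        rcases hx with rfl | rfl | rfl
        · exact hb1.symm
        · exact hb2.symm
        · exact hb3.symm
      have := Finset.card_le_card hsub
      simpa using this
    -- all degrees are at least 1
    have hd1 : ∀ v : Fin 16, 1 ≤ T.degree v := by
      intro v
      have hne : ∃ w : Fin 16, w ≠ v := by
        by_cases h : v = 0
        · exact ⟨1, by simp [h]⟩
        · exact ⟨0, fun hh => h hh.symm⟩
      obtain ⟨w, hw⟩ := hne
      obtain ⟨p⟩ := hTtree.isConnected.preconnected v w
      cases p with
      | nil => exact absurd rfl hw.symm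
      | cons a q =>
        rw [Nat.succ_le_iff, ← card_neighborFinset_eq_degree, Finset.card_pos]
        exact ⟨_, (mem_neighborFinset _ _ _).mpr a⟩
    -- sum of degrees is 30
    have hcard : T.edgeFinset.card + 1 = 16 := by
      have := hTtree.card_edgeFinset
      simpa using this
    have hsum : ∑ v : Fin 16, T.degree v = 30 := by
      rw [sum_degrees_eq_twice_card_edges]
      omega
    -- counting: at least 3 leaves
    set k := (Finset.univ.filter (fun v : Fin 16 => T.degree v = 1)).card with hk
    have hcount : 3 ≤ k := by
      set w : Fin 16 → ℕ := fun v => if T.degree v = 1 then 1 else 2 with hwdef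
      have hA : (∑ v : Fin 16, w v) + k = 32 := by
        have : ∀ v : Fin 16, w v + (if T.degree v = 1 then 1 else 0) = 2 := by
          intro v; by_cases h : T.degree v = 1 <;> simp [hwdef, h]
        have h32 : ∑ v : Fin 16, (w v + (if T.degree v = 1 then 1 else 0)) = 32 := by
          simp [this]
        rw [Finset.sum_add_distrib] at h32
        rw [hk, Finset.card_filter]
        omega
      have hB : w 15 + ∑ v ∈ Finset.univ.erase 15, w v = ∑ v : Fin 16, w v :=
        Finset.add_sum_erase Finset.univ w (Finset.mem_univ (15 : Fin 16))
      have hC : w 15 = 2 := by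
        have : T.degree 15 ≠ 1 := by omega
        simp [hwdef, this]
      have hD : ∑ v ∈ Finset.univ.erase 15, w v ≤ ∑ v ∈ Finset.univ.erase 15, T.degree v := by
        apply Finset.sum_le_sum
        intro v _
        by_cases h : T.degree v = 1
        · simp [hwdef, h]
        · have := hd1 v
          simp only [hwdef, h, if_false]
          omega
      have hE : T.degree 15 + ∑ v ∈ Finset.univ.erase 15, T.degree v = 30 := by
        have h := Finset.add_sum_erase Finset.univ (fun v : Fin 16 => T.degree v)
          (Finset.mem_univ (15 : Fin 16))
        omega
      omega
    -- convert to the ncard statement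
    have hconv : ∀ v : Fin 16, (T.neighborSet v).ncard = T.degree v := by
      intro v
      rw [← card_neighborFinset_eq_degree, ← Set.ncard_coe_finset (T.neighborFinset v),
        neighborFinset_def, Set.coe_toFinset]
    calc 3 ≤ k := hcount
    _ = {v : Fin 16 | (T.neighborSet v).ncard = 1}.ncard := by
        simp only [hconv]
        rw [Set.ncard_eq_toFinset_card', Set.toFinset_setOf]
end

section
/- For every positive integer m there exists a finite connected 3-regular simple graph G_m on n = 18·2^(m−1) − 2 vertices such that G_m has a spanning tree with exactly (n + 2)/6 = 3·2^(m−1) leaves, and every spanning tree of G_m has at least (n + 2)/6 leaves. Consequently, there exist connected cubic graphs of arbitrarily large order n whose minimum number of leaves over all spanning trees equals (n + 2)/6. -/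
open SimpleGraph
namespace Stmt9



variable {V : Type*}

/-- In a cycle based at `u`, `u` has two distinct neighbors on the cycle. -/
lemma two_nbrs_of_cycle {G : SimpleGraph V} {u : V} {c : G.Walk u u} (hc : c.IsCycle) :
    ∃ x y, x ≠ y ∧ G.Adj u x ∧ G.Adj u y ∧ x ∈ c.support ∧ y ∈ c.support := by
  cases c with
  | nil => exact absurd hc (by simp [Walk.isCycle_def])
  | @cons _ x1 _ hadj q =>
    rw [Walk.cons_isCycle_iff] at hc
    obtain ⟨hq, he⟩ := hc
    have hne : ¬ q.Nil := Walk.not_nil_of_ne (fun h => (G.ne_of_adj hadj) h.symm)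
    have hner : ¬ q.reverse.Nil := by
      rw [Walk.not_nil_iff_lt_length, Walk.length_reverse]
      rw [Walk.not_nil_iff_lt_length] at hne; exact hne
    obtain ⟨x2, h2, q2, hq2⟩ := Walk.not_nil_iff.mp hner
    refine ⟨x1, x2, ?_, hadj, h2, ?_, ?_⟩
    · rintro rfl
      apply he
      have : s(u, x1) ∈ q.reverse.edges := by rw [hq2]; simp
      rwa [Walk.edges_reverse, List.mem_reverse] at this
    · simp
    · have : x2 ∈ q.reverse.support := by rw [hq2]; simp
      rw [Walk.support_reverse, List.mem_reverse] at this
      simp [this]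

section Parent

variable (T : SimpleGraph V) (root : V) (p : V → V) (h : V → ℕ)

lemma parent_isAcyclic [DecidableEq V] (hp : ∀ v, v ≠ root → h (p v) < h v)
    (hadj : ∀ a b, T.Adj a b ↔ (a ≠ root ∧ p a = b) ∨ (b ≠ root ∧ p b = a)) :
    T.IsAcyclic := by
  intro v c hc
  have hne : c.support ≠ [] := by
    rw [c.support_eq_cons]; simp
  obtain ⟨u, hu⟩ : ∃ u, u ∈ c.support.argmax h := by
    cases e : c.support.argmax h with
    | none => exact absurd (List.argmax_eq_none.mp e) hne
    | some a => exact ⟨a, by simp [e]⟩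
  have humem : u ∈ c.support := List.argmax_mem hu
  have hmax : ∀ a ∈ c.support, h a ≤ h u := fun a ha => List.le_of_mem_argmax ha hu
  have hc' := hc.rotate humem
  have hsub : ∀ x ∈ (c.rotate u humem).support, x ∈ c.support := by
    intro x hx
    rw [Walk.support_eq_cons, List.mem_cons] at hx
    rcases hx with hx | hx
    · exact hx ▸ humem
    · have := (Walk.support_rotate c u humem).mem_iff.mp hx
      rw [c.support_eq_cons]
      exact List.mem_cons_of_mem _ this
  obtain ⟨x, y, hxy, hux, huy, hxs, hys⟩ := two_nbrs_of_cycle hc'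
  have key : ∀ z, T.Adj u z → z ∈ c.support → p u = z := by
    intro z hz hzs
    rcases (hadj u z).mp hz with ⟨_, hz'⟩ | ⟨hz1, hz2⟩
    · exact hz'
    · exfalso
      have h1 : h u < h z := hz2 ▸ hp z hz1
      exact absurd (hmax z hzs) (by omega)
  exact hxy ((key x hux (hsub x hxs)).symm.trans (key y huy (hsub y hys)))

lemma parent_connected (hp : ∀ v, v ≠ root → h (p v) < h v)
    (hadj : ∀ a b, T.Adj a b ↔ (a ≠ root ∧ p a = b) ∨ (b ≠ root ∧ p b = a)) :
    T.Connected := by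
  have key : ∀ (N : ℕ) (v : V), h v ≤ N → T.Reachable root v := by
    intro N
    induction N with
    | zero =>
      intro v hv
      by_cases hr : v = root
      · exact hr ▸ Reachable.refl _
      · exact absurd (hp v hr) (by omega)
    | succ N ih =>
      intro v hv
      by_cases hr : v = root
      · exact hr ▸ Reachable.refl _
      · have h1 : T.Adj (p v) v := ((hadj v (p v)).mpr (Or.inl ⟨hr, rfl⟩)).symm
        have h2 : h (p v) ≤ N := by have := hp v hr; omega
        exact (ih (p v) h2).trans h1.reachable
  have : Nonempty V := ⟨root⟩
  exact Connected.mk fun a b => ((key (h a) a le_rfl).symm).trans (key (h b) b le_rfl)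

lemma parent_isTree [DecidableEq V] (hp : ∀ v, v ≠ root → h (p v) < h v)
    (hadj : ∀ a b, T.Adj a b ↔ (a ≠ root ∧ p a = b) ∨ (b ≠ root ∧ p b = a)) :
    T.IsTree :=
  ⟨parent_connected T root p h hp hadj, parent_isAcyclic T root p h hp hadj⟩

end Parent


variable {V : Type*}

lemma path_len_eq {T : SimpleGraph V} (hT : T.IsAcyclic) {x y : V} (p q : T.Path x y) :
    (p : T.Walk x y).length = (q : T.Walk x y).length := by
  rw [isAcyclic_iff_path_unique.mp hT p q]

lemma no_tri {T : SimpleGraph V} (hT : T.IsAcyclic) {x y z : V}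
    (h1 : T.Adj x y) (h2 : T.Adj y z) (h3 : T.Adj z x) : False := by
  have d1 : x ≠ y := h1.ne
  have d2 : y ≠ z := h2.ne
  have d3 : z ≠ x := h3.ne
  have d1' := d1.symm; have d2' := d2.symm; have d3' := d3.symm
  have := path_len_eq hT ⟨Walk.cons h1 Walk.nil, by simp [Walk.isPath_def]; tauto⟩
    ⟨Walk.cons h3.symm (Walk.cons h2.symm Walk.nil), by simp [Walk.isPath_def]; tauto⟩
  simp at this

lemma no_quad {T : SimpleGraph V} (hT : T.IsAcyclic) {x y z w : V}
    (h1 : T.Adj x y) (h2 : T.Adj y z) (h3 : T.Adj z w) (h4 : T.Adj w x)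
    (hxz : x ≠ z) (hyw : y ≠ w) : False := by
  have d1 : x ≠ y := h1.ne
  have d2 : y ≠ z := h2.ne
  have d3 : z ≠ w := h3.ne
  have d4 : w ≠ x := h4.ne
  have d1' := d1.symm; have d2' := d2.symm; have d3' := d3.symm; have d4' := d4.symm
  have e1' := hxz.symm; have e2' := hyw.symm
  have := path_len_eq hT ⟨Walk.cons h1 Walk.nil, by simp [Walk.isPath_def]; tauto⟩
    ⟨Walk.cons h4.symm (Walk.cons h3.symm (Walk.cons h2.symm Walk.nil)), by
      simp [Walk.isPath_def]; tauto⟩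
  simp at this

lemma no_pent {T : SimpleGraph V} (hT : T.IsAcyclic) {v1 v2 v3 v4 v5 : V}
    (h1 : T.Adj v1 v2) (h2 : T.Adj v2 v3) (h3 : T.Adj v3 v4) (h4 : T.Adj v4 v5)
    (h5 : T.Adj v5 v1) (d13 : v1 ≠ v3) (d14 : v1 ≠ v4) (d24 : v2 ≠ v4) (d25 : v2 ≠ v5)
    (d35 : v3 ≠ v5) : False := by
  have d1 : v1 ≠ v2 := h1.ne
  have d2 : v2 ≠ v3 := h2.ne
  have d3 : v3 ≠ v4 := h3.ne
  have d4 : v4 ≠ v5 := h4.ne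
  have d5 : v5 ≠ v1 := h5.ne
  have d1' := d1.symm; have d2' := d2.symm; have d3' := d3.symm; have d4' := d4.symm
  have d5' := d5.symm; have e1' := d13.symm; have e2' := d14.symm; have e3' := d24.symm
  have e4' := d25.symm; have e5' := d35.symm
  have := path_len_eq hT ⟨Walk.cons h1 Walk.nil, by simp [Walk.isPath_def]; tauto⟩
    ⟨Walk.cons h5.symm (Walk.cons h4.symm (Walk.cons h3.symm (Walk.cons h2.symm Walk.nil))), by
      simp [Walk.isPath_def]; tauto⟩
  simp at this

lemma two_of_three [Finite V] {s : Set V} {x y z : V} (hsub : s ⊆ {x, y, z})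
    (hcard : 1 < s.ncard) : (x ∈ s ∧ y ∈ s) ∨ (x ∈ s ∧ z ∈ s) ∨ (y ∈ s ∧ z ∈ s) := by
  obtain ⟨u, w, hu, hw, huw⟩ := (Set.one_lt_ncard_iff (Set.toFinite s)).mp hcard
  have hu' := hsub hu
  have hw' := hsub hw
  simp only [Set.mem_insert_iff, Set.mem_singleton_iff] at hu' hw'
  rcases hu' with rfl | rfl | rfl <;> rcases hw' with rfl | rfl | rfl <;> tauto

lemma gadget_leaf [Finite V] {T : SimpleGraph V} (hT : T.IsAcyclic) {a b c d r : V}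
    (hab : a ≠ b) (hac : a ≠ c) (had : a ≠ d) (har : a ≠ r) (hbc : b ≠ c) (hbd : b ≠ d)
    (hbr : b ≠ r) (hcd : c ≠ d) (hcr : c ≠ r) (hdr : d ≠ r)
    (hNa : T.neighborSet a ⊆ {b, c, d}) (hNb : T.neighborSet b ⊆ {a, c, d})
    (hNc : T.neighborSet c ⊆ {a, b, r}) (hNd : T.neighborSet d ⊆ {a, b, r})
    (ha : 1 < (T.neighborSet a).ncard) (hb : 1 < (T.neighborSet b).ncard)
    (hc : 1 < (T.neighborSet c).ncard) (hd : 1 < (T.neighborSet d).ncard) : False := by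
  have Da := two_of_three hNa ha
  have Db := two_of_three hNb hb
  have Dc := two_of_three hNc hc
  have Dd := two_of_three hNd hd
  simp only [mem_neighborSet] at Da Db Dc Dd
  rw [T.adj_comm b a] at Db
  rw [T.adj_comm c a, T.adj_comm c b] at Dc
  rw [T.adj_comm d a, T.adj_comm d b] at Dd
  have N1 : ¬(T.Adj a b ∧ T.Adj b c ∧ T.Adj a c) := fun ⟨u1, u2, u3⟩ => no_tri hT u1 u2 u3.symm
  have N2 : ¬(T.Adj a b ∧ T.Adj b d ∧ T.Adj a d) := fun ⟨u1, u2, u3⟩ => no_tri hT u1 u2 u3.symm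
  have N3 : ¬(T.Adj a c ∧ T.Adj b c ∧ T.Adj b d ∧ T.Adj a d) := fun ⟨u1, u2, u3, u4⟩ =>
    no_quad hT u1 u2.symm u3 u4.symm hab hcd
  have N4 : ¬(T.Adj a c ∧ T.Adj c r ∧ T.Adj d r ∧ T.Adj a d) := fun ⟨u1, u2, u3, u4⟩ =>
    no_quad hT u1 u2 u3.symm u4.symm har hcd
  have N5 : ¬(T.Adj b c ∧ T.Adj c r ∧ T.Adj d r ∧ T.Adj b d) := fun ⟨u1, u2, u3, u4⟩ =>
    no_quad hT u1 u2 u3.symm u4.symm hbr hcd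
  have N6 : ¬(T.Adj a b ∧ T.Adj b c ∧ T.Adj c r ∧ T.Adj d r ∧ T.Adj a d) :=
    fun ⟨u1, u2, u3, u4, u5⟩ => no_pent hT u1 u2 u3 u4.symm u5.symm hac har hbr hbd hcd
  have N7 : ¬(T.Adj a b ∧ T.Adj b d ∧ T.Adj d r ∧ T.Adj c r ∧ T.Adj a c) :=
    fun ⟨u1, u2, u3, u4, u5⟩ => no_pent hT u1 u2 u3 u4.symm u5.symm had har hbr hbc hcd.symm
  rcases Da with ⟨A1, A2⟩ | ⟨A1, A2⟩ | ⟨A1, A2⟩ <;>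
    rcases Db with ⟨B1, B2⟩ | ⟨B1, B2⟩ | ⟨B1, B2⟩ <;>
    rcases Dc with ⟨C1, C2⟩ | ⟨C1, C2⟩ | ⟨C1, C2⟩ <;>
    rcases Dd with ⟨D1, D2⟩ | ⟨D1, D2⟩ | ⟨D1, D2⟩ <;>
    first
    | exact N1 ⟨by assumption, by assumption, by assumption⟩
    | exact N2 ⟨by assumption, by assumption, by assumption⟩
    | exact N3 ⟨by assumption, by assumption, by assumption, by assumption⟩
    | exact N4 ⟨by assumption, by assumption, by assumption, by assumption⟩
    | exact N5 ⟨by assumption, by assumption, by assumption, by assumption⟩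
    | exact N6 ⟨by assumption, by assumption, by assumption, by assumption, by assumption⟩
    | exact N7 ⟨by assumption, by assumption, by assumption, by assumption, by assumption⟩


/-- vertex type: `s` spine vertices, `s+2` gadgets of `5` vertices each. -/
abbrev V0 (s : ℕ) := Fin s ⊕ (Fin (s + 2) × Fin 5)

/-- which spine vertex gadget `j` is attached to -/
def σn (s j : ℕ) : ℕ := if j = 0 then 0 else if j = s + 1 then s - 1 else j - 1

lemma σn_lt {s j : ℕ} (hs : 1 ≤ s) (_hj : j < s + 2) : σn s j < s := by
  unfold σn; split_ifs <;> omega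

/-- gadget internal adjacency: vertices a b c d r = 0 1 2 3 4;
edges ab ac ad bc bd cr dr (i.e. K4 minus cd on abcd, plus r joined to c,d). -/
def gadB (t t' : Fin 5) : Prop :=
  (t.val, t'.val) ∈ [(0,1),(1,0),(0,2),(2,0),(0,3),(3,0),(1,2),(2,1),(1,3),(3,1),
    (2,4),(4,2),(3,4),(4,3)]

instance (t t' : Fin 5) : Decidable (gadB t t') := by
  unfold gadB; infer_instance

lemma gadB_symm : ∀ t t' : Fin 5, gadB t t' → gadB t' t := by decide
lemma gadB_irrefl : ∀ t : Fin 5, ¬ gadB t t := by decide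

def Adj0 (s : ℕ) : V0 s → V0 s → Prop
  | .inl i, .inl i' => i.val + 1 = i'.val ∨ i'.val + 1 = i.val
  | .inl i, .inr jt => jt.2.val = 4 ∧ σn s jt.1.val = i.val
  | .inr jt, .inl i => jt.2.val = 4 ∧ σn s jt.1.val = i.val
  | .inr jt, .inr jt' => jt.1 = jt'.1 ∧ gadB jt.2 jt'.2

def G0 (s : ℕ) : SimpleGraph (V0 s) where
  Adj := Adj0 s
  symm := by
    refine ⟨?_⟩; rintro (i | ⟨j, t⟩) (i' | ⟨j', t'⟩) h <;> simp only [Adj0] at h ⊢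
    · omega
    · exact h
    · exact h
    · exact ⟨h.1.symm, gadB_symm _ _ h.2⟩
  loopless := by
    refine ⟨?_⟩; rintro (i | ⟨j, t⟩) h <;> simp only [Adj0] at h
    · omega
    · exact gadB_irrefl _ h.2

variable {s : ℕ}

lemma g0_adj_inl_inl {i i' : Fin s} :
    (G0 s).Adj (.inl i) (.inl i') ↔ i.val + 1 = i'.val ∨ i'.val + 1 = i.val := Iff.rfl

lemma g0_adj_inl_inr {i : Fin s} {j : Fin (s+2)} {t : Fin 5} :
    (G0 s).Adj (.inl i) (.inr (j, t)) ↔ t.val = 4 ∧ σn s j.val = i.val := Iff.rfl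

lemma g0_adj_inr_inl {i : Fin s} {j : Fin (s+2)} {t : Fin 5} :
    (G0 s).Adj (.inr (j, t)) (.inl i) ↔ t.val = 4 ∧ σn s j.val = i.val := Iff.rfl

lemma g0_adj_inr_inr {j j' : Fin (s+2)} {t t' : Fin 5} :
    (G0 s).Adj (.inr (j, t)) (.inr (j', t')) ↔ j = j' ∧ gadB t t' := Iff.rfl

lemma nbr_a (j : Fin (s+2)) : (G0 s).neighborSet (.inr (j, 0)) =
    {.inr (j, 1), .inr (j, 2), .inr (j, 3)} := by
  ext w
  rcases w with i | ⟨j', t'⟩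
  · simp [mem_neighborSet, g0_adj_inr_inl]
  · rw [mem_neighborSet, g0_adj_inr_inr]
    constructor
    · rintro ⟨rfl, hg⟩
      fin_cases t' <;> revert hg <;> first | (intro hg; exact absurd hg (by decide)) | (intro _; simp)
    · intro h
      simp only [Set.mem_insert_iff, Set.mem_singleton_iff, Sum.inr.injEq, Prod.mk.injEq] at h
      rcases h with ⟨rfl, rfl⟩ | ⟨rfl, rfl⟩ | ⟨rfl, rfl⟩ <;> exact ⟨rfl, by decide⟩

lemma nbr_b (j : Fin (s+2)) : (G0 s).neighborSet (.inr (j, 1)) =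
    {.inr (j, 0), .inr (j, 2), .inr (j, 3)} := by
  ext w
  rcases w with i | ⟨j', t'⟩
  · simp [mem_neighborSet, g0_adj_inr_inl]
  · rw [mem_neighborSet, g0_adj_inr_inr]
    constructor
    · rintro ⟨rfl, hg⟩
      fin_cases t' <;> revert hg <;>
        first | (intro hg; exact absurd hg (by decide)) | (intro _; simp)
    · intro h
      simp only [Set.mem_insert_iff, Set.mem_singleton_iff, Sum.inr.injEq, Prod.mk.injEq] at h
      rcases h with ⟨rfl, rfl⟩ | ⟨rfl, rfl⟩ | ⟨rfl, rfl⟩ <;> exact ⟨rfl, by decide⟩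

lemma nbr_c (j : Fin (s+2)) : (G0 s).neighborSet (.inr (j, 2)) =
    {.inr (j, 0), .inr (j, 1), .inr (j, 4)} := by
  ext w
  rcases w with i | ⟨j', t'⟩
  · simp [mem_neighborSet, g0_adj_inr_inl]
  · rw [mem_neighborSet, g0_adj_inr_inr]
    constructor
    · rintro ⟨rfl, hg⟩
      fin_cases t' <;> revert hg <;>
        first | (intro hg; exact absurd hg (by decide)) | (intro _; simp)
    · intro h
      simp only [Set.mem_insert_iff, Set.mem_singleton_iff, Sum.inr.injEq, Prod.mk.injEq] at h
      rcases h with ⟨rfl, rfl⟩ | ⟨rfl, rfl⟩ | ⟨rfl, rfl⟩ <;> exact ⟨rfl, by decide⟩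

lemma nbr_d (j : Fin (s+2)) : (G0 s).neighborSet (.inr (j, 3)) =
    {.inr (j, 0), .inr (j, 1), .inr (j, 4)} := by
  ext w
  rcases w with i | ⟨j', t'⟩
  · simp only [mem_neighborSet, g0_adj_inr_inl, Set.mem_insert_iff, Set.mem_singleton_iff,
      reduceCtorEq, or_self, iff_false, not_and]
    intro h; exact absurd h (by decide)
  · rw [mem_neighborSet, g0_adj_inr_inr]
    constructor
    · rintro ⟨rfl, hg⟩
      fin_cases t' <;> revert hg <;>
        first | (intro hg; exact absurd hg (by decide)) | (intro _; simp)
    · intro h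
      simp only [Set.mem_insert_iff, Set.mem_singleton_iff, Sum.inr.injEq, Prod.mk.injEq] at h
      rcases h with ⟨rfl, rfl⟩ | ⟨rfl, rfl⟩ | ⟨rfl, rfl⟩ <;> exact ⟨rfl, by decide⟩

/-- attachment point of gadget `j` as an element of `Fin s` -/
def σf (hs : 1 ≤ s) (j : Fin (s+2)) : Fin s := ⟨σn s j.val, σn_lt hs j.isLt⟩

lemma nbr_r (hs : 1 ≤ s) (j : Fin (s+2)) : (G0 s).neighborSet (.inr (j, 4)) =
    {.inl (σf hs j), .inr (j, 2), .inr (j, 3)} := by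
  ext w
  rcases w with i | ⟨j', t'⟩
  · rw [mem_neighborSet, g0_adj_inr_inl]
    simp only [Set.mem_insert_iff, Set.mem_singleton_iff, Sum.inl.injEq, reduceCtorEq,
      or_false]
    constructor
    · rintro ⟨-, h⟩
      exact (Fin.ext h.symm : i = σf hs j).symm ▸ rfl
    · rintro rfl
      exact ⟨rfl, rfl⟩
  · rw [mem_neighborSet, g0_adj_inr_inr]
    constructor
    · rintro ⟨rfl, hg⟩
      fin_cases t' <;> revert hg <;>
        first | (intro hg; exact absurd hg (by decide)) | (intro _; simp)
    · intro h
      simp only [Set.mem_insert_iff, Set.mem_singleton_iff, Sum.inr.injEq, Prod.mk.injEq,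
        reduceCtorEq, false_or] at h
      rcases h with ⟨rfl, rfl⟩ | ⟨rfl, rfl⟩ <;> exact ⟨rfl, by decide⟩

lemma ncard3 {α : Type*} {x y z : α} (h1 : x ≠ y) (h2 : x ≠ z) (h3 : y ≠ z) :
    ({x, y, z} : Set α).ncard = 3 :=
  Set.ncard_eq_three.mpr ⟨x, y, z, h1, h2, h3, rfl⟩

lemma nbr_spine1 (hs : s = 1) (i : Fin s) :
    (G0 s).neighborSet (.inl i) = {.inr (⟨0, by omega⟩, ⟨4, by omega⟩),
      .inr (⟨1, by omega⟩, ⟨4, by omega⟩), .inr (⟨2, by omega⟩, ⟨4, by omega⟩)} := by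
  have hi : i.val = 0 := by omega
  ext w
  rcases w with i' | ⟨j, t⟩
  · simp only [mem_neighborSet, g0_adj_inl_inl, Set.mem_insert_iff, Set.mem_singleton_iff,
      reduceCtorEq, or_self, iff_false]
    have := i'.isLt; omega
  · simp only [mem_neighborSet, g0_adj_inl_inr, Set.mem_insert_iff, Set.mem_singleton_iff,
      Sum.inr.injEq, Prod.mk.injEq, Fin.ext_iff]
    unfold σn
    have := j.isLt; have := t.isLt
    split_ifs <;> omega

lemma nbr_spine2 (hs : 2 ≤ s) (i : Fin s) (hi : i.val = 0) :
    (G0 s).neighborSet (.inl i) = {.inl ⟨1, by omega⟩,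
      .inr (⟨0, by omega⟩, ⟨4, by omega⟩), .inr (⟨1, by omega⟩, ⟨4, by omega⟩)} := by
  ext w
  rcases w with i' | ⟨j, t⟩
  · simp only [mem_neighborSet, g0_adj_inl_inl, Set.mem_insert_iff, Set.mem_singleton_iff,
      reduceCtorEq, or_false, Sum.inl.injEq, Fin.ext_iff]
    omega
  · simp only [mem_neighborSet, g0_adj_inl_inr, Set.mem_insert_iff, Set.mem_singleton_iff,
      Sum.inr.injEq, Prod.mk.injEq, Fin.ext_iff, reduceCtorEq, false_or]
    unfold σn
    have := j.isLt; have := t.isLt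
    split_ifs <;> omega

lemma nbr_spine3 (i : Fin s) (h0 : 0 < i.val) (h1 : i.val < s - 1) :
    (G0 s).neighborSet (.inl i) = {.inl ⟨i.val - 1, by omega⟩, .inl ⟨i.val + 1, by omega⟩,
      .inr (⟨i.val + 1, by omega⟩, ⟨4, by omega⟩)} := by
  ext w
  rcases w with i' | ⟨j, t⟩
  · simp only [mem_neighborSet, g0_adj_inl_inl, Set.mem_insert_iff, Set.mem_singleton_iff,
      reduceCtorEq, or_false, Sum.inl.injEq, Fin.ext_iff]
    omega
  · simp only [mem_neighborSet, g0_adj_inl_inr, Set.mem_insert_iff, Set.mem_singleton_iff,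
      Sum.inr.injEq, Prod.mk.injEq, Fin.ext_iff, reduceCtorEq, false_or, or_false]
    unfold σn
    have := j.isLt; have := t.isLt
    split_ifs <;> omega

lemma nbr_spine4 (hs : 2 ≤ s) (i : Fin s) (hi : i.val = s - 1) :
    (G0 s).neighborSet (.inl i) = {.inl ⟨s - 2, by omega⟩,
      .inr (⟨s, by omega⟩, ⟨4, by omega⟩), .inr (⟨s + 1, by omega⟩, ⟨4, by omega⟩)} := by
  ext w
  rcases w with i' | ⟨j, t⟩
  · simp only [mem_neighborSet, g0_adj_inl_inl, Set.mem_insert_iff, Set.mem_singleton_iff,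
      reduceCtorEq, or_false, Sum.inl.injEq, Fin.ext_iff]
    have := i'.isLt; omega
  · simp only [mem_neighborSet, g0_adj_inl_inr, Set.mem_insert_iff, Set.mem_singleton_iff,
      Sum.inr.injEq, Prod.mk.injEq, Fin.ext_iff, reduceCtorEq, false_or]
    unfold σn
    have := j.isLt; have := t.isLt
    split_ifs <;> omega

theorem G0_regular (hs : 1 ≤ s) (v : V0 s) : ((G0 s).neighborSet v).ncard = 3 := by
  rcases v with i | ⟨j, t⟩
  · rcases Nat.lt_or_ge s 2 with h2 | h2
    · rw [nbr_spine1 (by omega) i]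
      exact ncard3 (by simp [Prod.ext_iff, Fin.ext_iff] <;> decide) (by simp [Prod.ext_iff, Fin.ext_iff] <;> decide)
        (by simp [Prod.ext_iff, Fin.ext_iff] <;> decide)
    · rcases Nat.eq_zero_or_pos i.val with h0 | h0
      · rw [nbr_spine2 h2 i h0]
        exact ncard3 (by simp) (by simp)
          (by simp [Prod.ext_iff, Fin.ext_iff] <;> decide)
      · rcases Nat.lt_or_ge i.val (s - 1) with h1 | h1
        · rw [nbr_spine3 i h0 h1]
          exact ncard3 (by simp [Fin.ext_iff]) (by simp) (by simp)
        · have hi : i.val = s - 1 := by have := i.isLt; omega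
          rw [nbr_spine4 h2 i hi]
          exact ncard3 (by simp) (by simp)
            (by simp [Prod.ext_iff, Fin.ext_iff] <;> decide)
  · fin_cases t
    · show ((G0 s).neighborSet (Sum.inr (j, 0))).ncard = 3
      rw [nbr_a j]
      exact ncard3 (by simp [Prod.ext_iff, Fin.ext_iff] <;> decide) (by simp [Prod.ext_iff, Fin.ext_iff] <;> decide)
        (by simp [Prod.ext_iff, Fin.ext_iff] <;> decide)
    · show ((G0 s).neighborSet (Sum.inr (j, 1))).ncard = 3
      rw [nbr_b j]
      exact ncard3 (by simp [Prod.ext_iff, Fin.ext_iff] <;> decide) (by simp [Prod.ext_iff, Fin.ext_iff] <;> decide)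
        (by simp [Prod.ext_iff, Fin.ext_iff] <;> decide)
    · show ((G0 s).neighborSet (Sum.inr (j, 2))).ncard = 3
      rw [nbr_c j]
      exact ncard3 (by simp [Prod.ext_iff, Fin.ext_iff] <;> decide) (by simp [Prod.ext_iff, Fin.ext_iff] <;> decide)
        (by simp [Prod.ext_iff, Fin.ext_iff] <;> decide)
    · show ((G0 s).neighborSet (Sum.inr (j, 3))).ncard = 3
      rw [nbr_d j]
      exact ncard3 (by simp [Prod.ext_iff, Fin.ext_iff] <;> decide) (by simp [Prod.ext_iff, Fin.ext_iff] <;> decide)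
        (by simp [Prod.ext_iff, Fin.ext_iff] <;> decide)
    · show ((G0 s).neighborSet (Sum.inr (j, 4))).ncard = 3
      rw [nbr_r hs j]
      exact ncard3 (by simp) (by simp) (by simp [Prod.ext_iff, Fin.ext_iff] <;> decide)


section ParentDef
variable {s : ℕ}

def p0 (hs : 1 ≤ s) : V0 s → V0 s
  | .inl i => .inl ⟨i.val - 1, by have := i.isLt; omega⟩
  | .inr (j, t) =>
    if t.val = 4 then .inl (σf hs j)
    else if t.val = 2 then .inr (j, 4)
    else if t.val = 0 then .inr (j, 2)
    else if t.val = 1 then .inr (j, 0)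
    else .inr (j, 1)

def root0 (hs : 1 ≤ s) : V0 s := .inl ⟨0, hs⟩

def ht0 : V0 s → ℕ
  | .inl i => i.val
  | .inr (j, t) => σn s j.val +
      (if t.val = 4 then 1 else if t.val = 2 then 2 else if t.val = 0 then 3
       else if t.val = 1 then 4 else 5)

lemma fv0 : ((0 : Fin 5)).val = 0 := rfl
lemma fv1 : ((1 : Fin 5)).val = 1 := rfl
lemma fv2 : ((2 : Fin 5)).val = 2 := rfl
lemma fv3 : ((3 : Fin 5)).val = 3 := rfl
lemma fv4 : ((4 : Fin 5)).val = 4 := rfl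

lemma ht0_dec (hs : 1 ≤ s) : ∀ v : V0 s, v ≠ root0 hs → ht0 (p0 hs v) < ht0 v := by
  rintro (i | ⟨j, t⟩) hne
  · have hi : i.val ≠ 0 := by
      intro h; exact hne (by simp [root0, Fin.ext_iff, h])
    simp only [p0, ht0]
    omega
  · fin_cases t <;> simp [p0, ht0, σf, fv0, fv1, fv2, fv3, fv4] <;> omega

lemma p0_adj (hs : 1 ≤ s) : ∀ v : V0 s, v ≠ root0 hs → (G0 s).Adj v (p0 hs v) := by
  rintro (i | ⟨j, t⟩) hne
  · have hi : i.val ≠ 0 := by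
      intro h; exact hne (by simp [root0, Fin.ext_iff, h])
    simp only [p0]
    rw [g0_adj_inl_inl]
    right; simp; omega
  · fin_cases t
    · exact (g0_adj_inr_inr).mpr ⟨rfl, by decide⟩
    · exact (g0_adj_inr_inr).mpr ⟨rfl, by decide⟩
    · exact (g0_adj_inr_inr).mpr ⟨rfl, by decide⟩
    · exact (g0_adj_inr_inr).mpr ⟨rfl, by decide⟩
    · exact (g0_adj_inr_inl).mpr ⟨rfl, rfl⟩

lemma p0_no_child_d (hs : 1 ≤ s) (j : Fin (s+2)) :
    ∀ u : V0 s, p0 hs u ≠ .inr (j, 3) := by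
  rintro (i | ⟨j', t'⟩)
  · simp [p0]
  · fin_cases t' <;> simp [p0, Prod.ext_iff, fv0, fv1, fv2, fv3, fv4] <;> decide

lemma p0_c (hs : 1 ≤ s) (j : Fin (s+2)) : p0 hs (.inr (j, 2)) = .inr (j, 4) := by simp [p0, fv2]
lemma p0_a (hs : 1 ≤ s) (j : Fin (s+2)) : p0 hs (.inr (j, 0)) = .inr (j, 2) := by simp [p0, fv0]
lemma p0_b (hs : 1 ≤ s) (j : Fin (s+2)) : p0 hs (.inr (j, 1)) = .inr (j, 0) := by simp [p0, fv1]
lemma p0_d (hs : 1 ≤ s) (j : Fin (s+2)) : p0 hs (.inr (j, 3)) = .inr (j, 1) := by simp [p0, fv3]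
lemma p0_r (hs : 1 ≤ s) (j : Fin (s+2)) : p0 hs (.inr (j, 4)) = .inl (σf hs j) := by simp [p0, fv4]

end ParentDef

lemma σn_0 : σn s 0 = 0 := by unfold σn; simp
lemma σn_1 (hs : 1 ≤ s) : σn s 1 = 0 := by
  unfold σn; rw [if_neg (by omega), if_neg (by omega)]
lemma σn_last : σn s (s+1) = s - 1 := by
  unfold σn; rw [if_neg (by omega), if_pos rfl]

section Main
variable {s n : ℕ}

def Gn (e : V0 s ≃ Fin n) : SimpleGraph (Fin n) := (G0 s).comap e.symm

variable (hs : 1 ≤ s) (e : V0 s ≃ Fin n)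

lemma gn_adj {a b : Fin n} : (Gn e).Adj a b ↔ (G0 s).Adj (e.symm a) (e.symm b) := Iff.rfl

lemma gn_nbr (v : Fin n) : (Gn e).neighborSet v = e '' (G0 s).neighborSet (e.symm v) := by
  ext u
  simp only [mem_neighborSet, gn_adj, Set.mem_image]
  constructor
  · intro h; exact ⟨e.symm u, h, by simp⟩
  · rintro ⟨x, hx, rfl⟩; simpa using hx

def Tn : SimpleGraph (Fin n) where
  Adj a b := (a ≠ e (root0 hs) ∧ e (p0 hs (e.symm a)) = b) ∨
             (b ≠ e (root0 hs) ∧ e (p0 hs (e.symm b)) = a)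
  symm := ⟨fun a b h => h.symm⟩
  loopless := by
    refine ⟨fun a h => ?_⟩
    have key : ∀ h1 : a ≠ e (root0 hs), e (p0 hs (e.symm a)) ≠ a := by
      intro h1 h2
      have h3 : e.symm a ≠ root0 hs := by
        intro hh
        exact h1 (by rw [← hh, e.apply_symm_apply])
      have h4 : p0 hs (e.symm a) = e.symm a := by
        conv_rhs => rw [← h2]
        simp
      have := ht0_dec hs (e.symm a) h3
      rw [h4] at this
      omega
    rcases h with ⟨h1, h2⟩ | ⟨h1, h2⟩ <;> exact key h1 h2

lemma tn_adj {a b : Fin n} : (Tn hs e).Adj a b ↔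
    (a ≠ e (root0 hs) ∧ e (p0 hs (e.symm a)) = b) ∨
    (b ≠ e (root0 hs) ∧ e (p0 hs (e.symm b)) = a) := Iff.rfl

lemma Tn_isTree : (Tn hs e).IsTree := by
  apply parent_isTree (Tn hs e) (e (root0 hs)) (fun a => e (p0 hs (e.symm a))) (ht0 ∘ e.symm)
  · intro v hv
    simp only [Function.comp_apply, Equiv.symm_apply_apply]
    exact ht0_dec hs (e.symm v) (fun hh => hv (by rw [← hh, e.apply_symm_apply]))
  · intro a b; exact tn_adj hs e

lemma Tn_le : Tn hs e ≤ Gn e := by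
  intro a b h
  rcases h with ⟨h1, rfl⟩ | ⟨h1, rfl⟩
  · rw [gn_adj]
    simp only [Equiv.symm_apply_apply]
    exact p0_adj hs _ (fun hh => h1 (by rw [← hh, e.apply_symm_apply]))
  · apply (Gn e).adj_symm
    rw [gn_adj]
    simp only [Equiv.symm_apply_apply]
    exact p0_adj hs _ (fun hh => h1 (by rw [← hh, e.apply_symm_apply]))

lemma hnee {x y : V0 s} (h : x ≠ y) : e x ≠ e y := fun hh => h (e.injective hh)

lemma mem_Tn_parent (w : V0 s) (hw : w ≠ root0 hs) :
    e (p0 hs w) ∈ (Tn hs e).neighborSet (e w) := by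
  rw [mem_neighborSet, tn_adj]
  exact Or.inl ⟨hnee e hw, by simp⟩

lemma mem_Tn_child (w u : V0 s) (hu : u ≠ root0 hs) (h : p0 hs u = w) :
    e u ∈ (Tn hs e).neighborSet (e w) := by
  rw [mem_neighborSet, tn_adj]
  exact Or.inr ⟨hnee e hu, by simp [h]⟩

lemma Tn_nbr_d (j : Fin (s+2)) :
    (Tn hs e).neighborSet (e (.inr (j, 3))) = {e (.inr (j, 1))} := by
  ext u
  rw [mem_neighborSet, tn_adj]
  constructor
  · rintro (⟨h1, rfl⟩ | ⟨h1, h2⟩)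
    · simp only [Equiv.symm_apply_apply, p0_d, Set.mem_singleton_iff]
    · exfalso
      have : p0 hs (e.symm u) = .inr (j, 3) := e.injective (by simpa using h2)
      exact p0_no_child_d hs j _ this
  · rintro rfl
    exact Or.inl ⟨hnee e (by simp [root0]), by simp [p0_d]⟩

lemma Tn_two_nbrs (w : V0 s) (hw : ∀ j : Fin (s+2), w ≠ .inr (j, 3)) :
    1 < ((Tn hs e).neighborSet (e w)).ncard := by
  rw [Set.one_lt_ncard_iff (Set.toFinite _)]
  rcases w with i | ⟨j, t⟩
  · by_cases hi : i.val = 0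
    · refine ⟨e (.inr (⟨0, by omega⟩, 4)), e (.inr (⟨1, by omega⟩, 4)), ?_, ?_, ?_⟩
      · apply mem_Tn_child hs e _ _ (by simp [root0])
        rw [p0_r]
        congr 1
        exact Fin.ext (show σn s 0 = i.val by rw [σn_0]; omega)
      · apply mem_Tn_child hs e _ _ (by simp [root0])
        rw [p0_r]
        congr 1
        exact Fin.ext (show σn s 1 = i.val by rw [σn_1 hs]; omega)
      · exact hnee e (by simp [Prod.ext_iff, Fin.ext_iff])
    · by_cases hlast : i.val < s - 1
      · refine ⟨e (p0 hs (.inl i)), e (.inl ⟨i.val + 1, by omega⟩), ?_, ?_, ?_⟩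
        · exact mem_Tn_parent hs e _ (by simp [root0, Fin.ext_iff]; omega)
        · apply mem_Tn_child hs e _ _ (by simp [root0, Fin.ext_iff])
          simp [p0, Fin.ext_iff]
        · apply hnee e
          simp only [p0, Sum.inl.injEq, Fin.ext_iff, ne_eq]
          omega
      · have hival : i.val = s - 1 := by have := i.isLt; omega
        refine ⟨e (p0 hs (.inl i)), e (.inr (⟨s + 1, by omega⟩, 4)), ?_, ?_, ?_⟩
        · exact mem_Tn_parent hs e _ (by simp [root0, Fin.ext_iff]; omega)
        · apply mem_Tn_child hs e _ _ (by simp [root0])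
          rw [p0_r]
          congr 1
          exact Fin.ext (show σn s (s+1) = i.val by rw [σn_last]; omega)
        · apply hnee e
          simp [p0]
  · fin_cases t
    · refine ⟨e (p0 hs (.inr (j, 0))), e (.inr (j, 1)), ?_, ?_, ?_⟩
      · exact mem_Tn_parent hs e _ (by simp [root0])
      · exact mem_Tn_child hs e _ _ (by simp [root0]) (p0_b hs j)
      · apply hnee e
        rw [p0_a]
        simp [Prod.ext_iff, Fin.ext_iff] <;> decide
    · refine ⟨e (p0 hs (.inr (j, 1))), e (.inr (j, 3)), ?_, ?_, ?_⟩
      · exact mem_Tn_parent hs e _ (by simp [root0])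
      · exact mem_Tn_child hs e _ _ (by simp [root0]) (p0_d hs j)
      · apply hnee e
        rw [p0_b]
        simp [Prod.ext_iff, Fin.ext_iff] <;> decide
    · refine ⟨e (p0 hs (.inr (j, 2))), e (.inr (j, 0)), ?_, ?_, ?_⟩
      · exact mem_Tn_parent hs e _ (by simp [root0])
      · exact mem_Tn_child hs e _ _ (by simp [root0]) (p0_a hs j)
      · apply hnee e
        rw [p0_c]
        simp [Prod.ext_iff, Fin.ext_iff] <;> decide
    · exact absurd rfl (hw j)
    · refine ⟨e (p0 hs (.inr (j, 4))), e (.inr (j, 2)), ?_, ?_, ?_⟩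
      · exact mem_Tn_parent hs e _ (by simp [root0])
      · exact mem_Tn_child hs e _ _ (by simp [root0]) (p0_c hs j)
      · apply hnee e
        rw [p0_r]
        simp

lemma Tn_leafset : {v : Fin n | ((Tn hs e).neighborSet v).ncard = 1} =
    Set.range (fun j : Fin (s+2) => e (.inr (j, 3))) := by
  ext v
  simp only [Set.mem_setOf_eq, Set.mem_range]
  constructor
  · intro hv
    by_contra hnr
    push_neg at hnr
    have hw : ∀ j : Fin (s+2), e.symm v ≠ .inr (j, 3) := by
      intro j hh
      exact hnr j (by rw [← hh, e.apply_symm_apply])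
    have := Tn_two_nbrs hs e (e.symm v) hw
    rw [e.apply_symm_apply] at this
    omega
  · rintro ⟨j, rfl⟩
    rw [Tn_nbr_d hs e j]
    exact Set.ncard_singleton _

lemma range_ncard : (Set.range (fun j : Fin (s+2) => e (.inr (j, 3)))).ncard = s + 2 := by
  have hinj : Function.Injective (fun j : Fin (s+2) => e (.inr (j, 3))) := by
    intro a b h
    have := e.injective h
    simpa using this
  rw [← Set.image_univ, Set.ncard_image_of_injective _ hinj, Set.ncard_univ]
  simp

lemma exists_nbr_of_tree (hn : 2 ≤ n) {T : SimpleGraph (Fin n)} (hT : T.Connected)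
    (v : Fin n) : (T.neighborSet v).Nonempty := by
  have hex : ∃ w : Fin n, w ≠ v := by
    refine ⟨if h : v = ⟨0, by omega⟩ then ⟨1, by omega⟩ else ⟨0, by omega⟩, ?_⟩
    split_ifs with h
    · rw [h]; simp [Fin.ext_iff]
    · exact fun hh => h hh.symm
  obtain ⟨w, hw⟩ := hex
  obtain ⟨q⟩ := hT.preconnected v w
  cases q with
  | nil => exact absurd rfl hw.symm
  | cons h _ => exact ⟨_, h⟩

lemma lower_bound (hn : 2 ≤ n) (T : SimpleGraph (Fin n)) (hle : T ≤ Gn e) (hT : T.IsTree) :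
    s + 2 ≤ {v : Fin n | (T.neighborSet v).ncard = 1}.ncard := by
  have hgad : ∀ j : Fin (s+2), ∃ t : Fin 5, t.val < 4 ∧
      (T.neighborSet (e (.inr (j, t)))).ncard = 1 := by
    intro j
    by_contra hcon
    push_neg at hcon
    have hub : ∀ t : Fin 5, T.neighborSet (e (.inr (j, t))) ⊆
        e '' ((G0 s).neighborSet (.inr (j, t))) := by
      intro t u hu
      have h1 : (Gn e).Adj (e (.inr (j, t))) u := hle hu
      rw [gn_adj] at h1
      simp only [Equiv.symm_apply_apply] at h1
      exact ⟨e.symm u, h1, by simp⟩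
    have hge : ∀ t : Fin 5, t.val < 4 → 1 < (T.neighborSet (e (.inr (j, t)))).ncard := by
      intro t ht
      have h1 := exists_nbr_of_tree hn hT.isConnected (e (.inr (j, t)))
      have h2 : 0 < (T.neighborSet (e (.inr (j, t)))).ncard :=
        (Set.ncard_pos (Set.toFinite _)).mpr h1
      have h3 := hcon t ht
      omega
    have sub_a := hub 0
    rw [nbr_a, Set.image_insert_eq, Set.image_insert_eq, Set.image_singleton] at sub_a
    have sub_b := hub 1
    rw [nbr_b, Set.image_insert_eq, Set.image_insert_eq, Set.image_singleton] at sub_b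
    have sub_c := hub 2
    rw [nbr_c, Set.image_insert_eq, Set.image_insert_eq, Set.image_singleton] at sub_c
    have sub_d := hub 3
    rw [nbr_d, Set.image_insert_eq, Set.image_insert_eq, Set.image_singleton] at sub_d
    exact gadget_leaf hT.IsAcyclic
      (hnee e (by simp [Prod.ext_iff, Fin.ext_iff] <;> decide))
      (hnee e (by simp [Prod.ext_iff, Fin.ext_iff] <;> decide))
      (hnee e (by simp [Prod.ext_iff, Fin.ext_iff] <;> decide))
      (hnee e (by simp [Prod.ext_iff, Fin.ext_iff] <;> decide))
      (hnee e (by simp [Prod.ext_iff, Fin.ext_iff] <;> decide))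
      (hnee e (by simp [Prod.ext_iff, Fin.ext_iff] <;> decide))
      (hnee e (by simp [Prod.ext_iff, Fin.ext_iff] <;> decide))
      (hnee e (by simp [Prod.ext_iff, Fin.ext_iff] <;> decide))
      (hnee e (by simp [Prod.ext_iff, Fin.ext_iff] <;> decide))
      (hnee e (by simp [Prod.ext_iff, Fin.ext_iff] <;> decide))
      sub_a sub_b sub_c sub_d
      (hge 0 (by decide)) (hge 1 (by decide)) (hge 2 (by decide)) (hge 3 (by decide))
  choose t ht1 ht2 using hgad
  have hinj : Function.Injective (fun j : Fin (s+2) => e (.inr (j, t j))) := by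
    intro a b h
    have := e.injective h
    simp only [Sum.inr.injEq, Prod.mk.injEq] at this
    exact this.1
  have hsub : Set.range (fun j : Fin (s+2) => e (.inr (j, t j))) ⊆
      {v : Fin n | (T.neighborSet v).ncard = 1} := by
    rintro v ⟨j, rfl⟩
    exact ht2 j
  have h1 : (Set.range (fun j : Fin (s+2) => e (.inr (j, t j)))).ncard = s + 2 := by
    rw [← Set.image_univ, Set.ncard_image_of_injective _ hinj, Set.ncard_univ]
    simp
  calc s + 2 = _ := h1.symm
    _ ≤ _ := Set.ncard_le_ncard hsub (Set.toFinite _)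

end Main

end Stmt9

/-- For every positive integer `m`, there is a finite connected `3`-regular simple graph on
`n = 18 * 2 ^ (m - 1) - 2` vertices having a spanning tree with exactly
`(n + 2) / 6 = 3 * 2 ^ (m - 1)` leaves, and every spanning tree of which has at least
`(n + 2) / 6` leaves. -/
theorem stmt_9 (m : ℕ) (hm : 1 ≤ m) :
    ∃ G : SimpleGraph (Fin (18 * 2 ^ (m - 1) - 2)),
      G.Connected ∧ (∀ w, (G.neighborSet w).ncard = 3) ∧
      ((18 * 2 ^ (m - 1) - 2) + 2) / 6 = 3 * 2 ^ (m - 1) ∧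
      (∃ T : SimpleGraph (Fin (18 * 2 ^ (m - 1) - 2)), T ≤ G ∧ T.IsTree ∧
        {v | (T.neighborSet v).ncard = 1}.ncard = 3 * 2 ^ (m - 1)) ∧
      (∀ T : SimpleGraph (Fin (18 * 2 ^ (m - 1) - 2)), T ≤ G → T.IsTree →
        3 * 2 ^ (m - 1) ≤ {v | (T.neighborSet v).ncard = 1}.ncard) := by
  have hP : 1 ≤ 2 ^ (m - 1) := Nat.one_le_two_pow
  have hs : 1 ≤ 3 * 2 ^ (m - 1) - 2 := by omega
  have hcard : (3 * 2 ^ (m - 1) - 2) + ((3 * 2 ^ (m - 1) - 2) + 2) * 5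
      = 18 * 2 ^ (m - 1) - 2 := by omega
  let e : Stmt9.V0 (3 * 2 ^ (m - 1) - 2) ≃ Fin (18 * 2 ^ (m - 1) - 2) :=
    ((Equiv.sumCongr (Equiv.refl (Fin (3 * 2 ^ (m - 1) - 2))) finProdFinEquiv).trans
      finSumFinEquiv).trans (finCongr hcard)
  have hn : 2 ≤ 18 * 2 ^ (m - 1) - 2 := by omega
  refine ⟨Stmt9.Gn e, (Stmt9.Tn_isTree hs e).isConnected.mono (Stmt9.Tn_le hs e), ?_, by omega,
    ⟨Stmt9.Tn hs e, Stmt9.Tn_le hs e, Stmt9.Tn_isTree hs e, ?_⟩, ?_⟩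
  · intro w
    rw [Stmt9.gn_nbr, Set.ncard_image_of_injective _ e.injective]
    exact Stmt9.G0_regular hs _
  · rw [Stmt9.Tn_leafset hs e, Stmt9.range_ncard]
    omega
  · intro T hle hT
    have := Stmt9.lower_bound e hn T hle hT
    omega
end
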